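/- arXiv:1704.03195 — 2 statements merged into one kernel-verified Lean document; each statement's English description precedes it below -/
import Mathlib

section
/- Classification of one-dimensional Class A minimizers: let n = 1 and r > 0. If E ⊆ ℝ is a Class A minimizer for Per_r, then, up to a set of Lebesgue measure zero, E is either the empty set, or all of ℝ, or a halfline of the form (a, +∞) or (−∞, a) for some a ∈ ℝ. -/
open MeasureTheory Metric Set Filter Topology
open scoped RealInnerProductSpace ENNReal

noncomputable section

/-- The set of points of Lebesgue density one of `E`. -/
def densityOnePoints (n : ℕ) (E : Set (EuclideanSpace ℝ (Fin n))) :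
    Set (EuclideanSpace ℝ (Fin n)) :=
  {x | Tendsto (fun ρ : ℝ => volume (E ∩ ball x ρ) / volume (ball x ρ)) (𝓝[>] 0) (𝓝 1)}

/-- The `r`-perimeter `Per_r(E, Ω) = (1/(2r)) Lⁿ((∂E ⊕ B_r) ∩ Ω)`, where `E` is identified with
its points of density one, `∂E` is the topological boundary of that set, and
`A ⊕ B_r` is the open `r`-neighbourhood of `A`. -/
def perR (n : ℕ) (r : ℝ) (E Ω : Set (EuclideanSpace ℝ (Fin n))) : ℝ≥0∞ :=
  volume (Metric.thickening r (frontier (densityOnePoints n E)) ∩ Ω) / ENNReal.ofReal (2 * r)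

/-- The inner domain `D ⊖ B_r = {x ∈ D : dist(x, ∂D) ≥ r}`. -/
def innerDomain (n : ℕ) (r : ℝ) (D : Set (EuclideanSpace ℝ (Fin n))) :
    Set (EuclideanSpace ℝ (Fin n)) :=
  {x ∈ D | r ≤ Metric.infDist x (frontier D)}

/-- `E` is a minimizer of `Per_r` in `D`: it minimizes among measurable competitors that
coincide with `E` outside `D ⊖ B_r`. -/
def IsMinimizerPerR (n : ℕ) (r : ℝ) (E D : Set (EuclideanSpace ℝ (Fin n))) : Prop :=
  ∀ F : Set (EuclideanSpace ℝ (Fin n)), MeasurableSet F →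
    F \ innerDomain n r D = E \ innerDomain n r D → perR n r E D ≤ perR n r F D


namespace CAux

/-- Density-one points for subsets of `ℝ`. -/
def dens1 (E : Set ℝ) : Set ℝ :=
  {x | Tendsto (fun ρ : ℝ => volume (E ∩ ball x ρ) / volume (ball x ρ)) (𝓝[>] 0) (𝓝 1)}

lemma volume_ball_ne_zero {x ρ : ℝ} (hρ : 0 < ρ) : volume (ball x ρ) ≠ 0 := by
  simp [Real.volume_ball, ENNReal.ofReal_eq_zero]; linarith

lemma volume_ball_ne_top (x ρ : ℝ) : volume (ball x ρ) ≠ ∞ := by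
  simp [Real.volume_ball, ENNReal.mul_eq_top]

lemma dens1_congr {E F : Set ℝ} (h : E =ᵐ[volume] F) : dens1 E = dens1 F := by
  ext x
  have hEq : ∀ ρ : ℝ, volume (E ∩ ball x ρ) = volume (F ∩ ball x ρ) := fun ρ =>
    measure_congr (ae_eq_set_inter h (EventuallyEq.refl _ _))
  simp only [dens1, mem_setOf_eq]
  exact tendsto_congr (fun ρ => by rw [hEq ρ])

lemma mem_dens1_of_ball_subset {E : Set ℝ} {x δ : ℝ} (hδ : 0 < δ) (h : ball x δ ⊆ E) :
    x ∈ dens1 E := by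
  have hev : (fun ρ : ℝ => volume (E ∩ ball x ρ) / volume (ball x ρ)) =ᶠ[𝓝[>] (0:ℝ)]
      (fun _ => (1 : ℝ≥0∞)) := by
    filter_upwards [Ioo_mem_nhdsGT hδ] with ρ hρ
    have hsub : ball x ρ ⊆ E := (ball_subset_ball hρ.2.le).trans h
    rw [inter_eq_self_of_subset_right hsub,
      ENNReal.div_self (volume_ball_ne_zero hρ.1) (volume_ball_ne_top x ρ)]
  exact (Filter.tendsto_congr' hev).2 tendsto_const_nhds

lemma not_mem_dens1_of_ball_inter {E : Set ℝ} {x δ : ℝ} (hδ : 0 < δ)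
    (h : E ∩ ball x δ = ∅) : x ∉ dens1 E := by
  intro hx
  have hev : (fun ρ : ℝ => volume (E ∩ ball x ρ) / volume (ball x ρ)) =ᶠ[𝓝[>] (0:ℝ)]
      (fun _ => (0 : ℝ≥0∞)) := by
    filter_upwards [Ioo_mem_nhdsGT hδ] with ρ hρ
    have : E ∩ ball x ρ = ∅ :=
      eq_empty_of_subset_empty (h ▸ inter_subset_inter_right E (ball_subset_ball hρ.2.le))
    simp [this]
  have h0 : Tendsto (fun ρ : ℝ => volume (E ∩ ball x ρ) / volume (ball x ρ)) (𝓝[>] (0:ℝ))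
      (𝓝 0) := (Filter.tendsto_congr' hev).2 tendsto_const_nhds
  exact one_ne_zero (tendsto_nhds_unique hx h0)

lemma dens1_empty : dens1 (∅ : Set ℝ) = ∅ := by
  ext x
  simp only [mem_empty_iff_false, iff_false]
  exact not_mem_dens1_of_ball_inter one_pos (by simp)

lemma dens1_univ : dens1 (univ : Set ℝ) = univ := by
  ext x
  simp only [mem_univ, iff_true]
  exact mem_dens1_of_ball_subset one_pos (subset_univ _)

lemma dens1_Ioi (a : ℝ) : dens1 (Ioi a) = Ioi a := by
  ext x
  constructor
  · intro hx
    by_contra hxa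
    simp only [mem_Ioi, mem_Iio, not_lt] at hxa
    rcases lt_or_eq_of_le hxa with hlt | rfl
    · refine not_mem_dens1_of_ball_inter (δ := a - x) (by linarith) ?_ hx
      ext y
      simp only [mem_inter_iff, mem_Ioi, mem_ball, Real.dist_eq, mem_empty_iff_false, iff_false,
        not_and]
      intro hy
      rw [abs_lt]
      intro h'
      linarith [h'.2]
    · -- x = a : the ratio is constantly 1/2
      have hev : (fun ρ : ℝ => volume (Ioi x ∩ ball x ρ) / volume (ball x ρ)) =ᶠ[𝓝[>] (0:ℝ)]
          (fun _ => ENNReal.ofReal (1/2)) := by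
        filter_upwards [self_mem_nhdsWithin] with ρ (hρ : 0 < ρ)
        have h1 : Ioi x ∩ ball x ρ = Ioo x (x + ρ) := by
          ext y
          simp only [mem_inter_iff, mem_Ioi, mem_ball, Real.dist_eq, mem_Ioo, abs_lt]
          constructor
          · rintro ⟨h1, _, h3⟩; exact ⟨h1, by linarith⟩
          · rintro ⟨h1, h2⟩; exact ⟨h1, by constructor <;> linarith⟩
        rw [h1, Real.volume_Ioo, Real.volume_ball, add_sub_cancel_left,
          ← ENNReal.ofReal_div_of_pos (by linarith)]
        congr 1
        field_simp
      have h2 : Tendsto (fun ρ : ℝ => volume (Ioi x ∩ ball x ρ) / volume (ball x ρ))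
          (𝓝[>] (0:ℝ)) (𝓝 (ENNReal.ofReal (1/2))) := (Filter.tendsto_congr' hev).2
          tendsto_const_nhds
      have huniq : (1 : ℝ≥0∞) = ENNReal.ofReal (1/2) := tendsto_nhds_unique hx h2
      have hlt1 : ENNReal.ofReal (1/2) < 1 := ENNReal.ofReal_lt_one.2 (by norm_num)
      rw [← huniq] at hlt1
      exact lt_irrefl _ hlt1
  · intro hx
    refine mem_dens1_of_ball_subset (δ := x - a) (by simpa using hx) ?_
    intro y hy
    rw [mem_ball, Real.dist_eq, abs_lt] at hy
    have := hy.1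
    simp only [mem_Ioi]
    linarith

lemma dens1_Iio (a : ℝ) : dens1 (Iio a) = Iio a := by
  ext x
  constructor
  · intro hx
    by_contra hxa
    simp only [mem_Ioi, mem_Iio, not_lt] at hxa
    rcases lt_or_eq_of_le hxa with hlt | rfl
    · refine not_mem_dens1_of_ball_inter (δ := x - a) (by linarith) ?_ hx
      ext y
      simp only [mem_inter_iff, mem_Iio, mem_ball, Real.dist_eq, mem_empty_iff_false, iff_false,
        not_and]
      intro hy
      rw [abs_lt]
      intro h'
      linarith [h'.1]
    · have hev : (fun ρ : ℝ => volume (Iio a ∩ ball a ρ) / volume (ball a ρ)) =ᶠ[𝓝[>] (0:ℝ)]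
          (fun _ => ENNReal.ofReal (1/2)) := by
        filter_upwards [self_mem_nhdsWithin] with ρ (hρ : 0 < ρ)
        have h1 : Iio a ∩ ball a ρ = Ioo (a - ρ) a := by
          ext y
          simp only [mem_inter_iff, mem_Iio, mem_ball, Real.dist_eq, mem_Ioo, abs_lt]
          constructor
          · rintro ⟨h1, h2, _⟩; exact ⟨by linarith, h1⟩
          · rintro ⟨h1, h2⟩; exact ⟨h2, by constructor <;> linarith⟩
        rw [h1, Real.volume_Ioo, Real.volume_ball, sub_sub_cancel,
          ← ENNReal.ofReal_div_of_pos (by linarith)]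
        congr 1
        field_simp
      have h2 : Tendsto (fun ρ : ℝ => volume (Iio a ∩ ball a ρ) / volume (ball a ρ))
          (𝓝[>] (0:ℝ)) (𝓝 (ENNReal.ofReal (1/2))) := (Filter.tendsto_congr' hev).2
          tendsto_const_nhds
      have huniq : (1 : ℝ≥0∞) = ENNReal.ofReal (1/2) := tendsto_nhds_unique hx h2
      have hlt1 : ENNReal.ofReal (1/2) < 1 := ENNReal.ofReal_lt_one.2 (by norm_num)
      rw [← huniq] at hlt1
      exact lt_irrefl _ hlt1
  · intro hx
    refine mem_dens1_of_ball_subset (δ := a - x) (by simpa using hx) ?_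
    intro y hy
    rw [mem_ball, Real.dist_eq, abs_lt] at hy
    have := hy.2
    simp only [mem_Iio]
    linarith

/-- thickening of a singleton in ℝ -/
lemma thickening_singleton (r a : ℝ) : thickening r ({a} : Set ℝ) = Ioo (a - r) (a + r) := by
  rw [thickening_eq_biUnion_ball]
  simp [Real.ball_eq_Ioo]

/-- The two-window bound: if `T` avoids the middle interval, its `r`-thickening intersected
with the big interval is inside the two end windows. -/
lemma thickening_windows {r c m : ℝ} {T : Set ℝ} (hT : T ∩ Ioo (c - m) (c + m) = ∅) :
    thickening r T ∩ Ioo (c - m - r) (c + m + r) ⊆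
      Ioo (c - m - r) (c - m + r) ∪ Ioo (c + m - r) (c + m + r) := by
  rintro y ⟨hy1, hy2⟩
  rw [mem_thickening_iff] at hy1
  obtain ⟨z, hzT, hdz⟩ := hy1
  rw [Real.dist_eq, abs_lt] at hdz
  have hz : z ≤ c - m ∨ c + m ≤ z := by
    by_contra h
    push_neg at h
    exact absurd (hT ▸ (⟨hzT, h.1, h.2⟩ : z ∈ T ∩ Ioo (c - m) (c + m))) (notMem_empty z)
  rw [mem_Ioo] at hy2
  rcases hz with h | h
  · exact Or.inl ⟨hy2.1, by linarith [hdz.2]⟩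
  · exact Or.inr ⟨by linarith [hdz.1], hy2.2⟩

lemma volume_windows {r c m : ℝ} (hr : 0 ≤ r) :
    volume (Ioo (c - m - r) (c - m + r) ∪ Ioo (c + m - r) (c + m + r)) ≤
      ENNReal.ofReal (4 * r) := by
  refine le_trans (measure_union_le _ _) ?_
  rw [Real.volume_Ioo, Real.volume_Ioo]
  have h1 : c - m + r - (c - m - r) = 2 * r := by ring
  have h2 : c + m + r - (c + m - r) = 2 * r := by ring
  rw [h1, h2, ← ENNReal.ofReal_add (by linarith) (by linarith)]
  exact ENNReal.ofReal_le_ofReal (by linarith)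

lemma volume_two_balls {r a b : ℝ} (hr : 0 < r) (hab : a < b) :
    ENNReal.ofReal (2 * r) < volume (Ioo (a - r) (a + r) ∪ Ioo (b - r) (b + r)) := by
  rcases lt_or_ge (b - a) (2 * r) with h | h
  · have hsub : Ioo (a - r) (b + r) ⊆ Ioo (a - r) (a + r) ∪ Ioo (b - r) (b + r) := by
      rintro y ⟨h1, h2⟩
      rcases lt_or_ge y (a + r) with h3 | h3
      · exact Or.inl ⟨h1, h3⟩
      · exact Or.inr ⟨by linarith, h2⟩
    have hv : volume (Ioo (a - r) (b + r)) = ENNReal.ofReal (b - a + 2 * r) := by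
      rw [Real.volume_Ioo]; congr 1; ring
    calc ENNReal.ofReal (2 * r) < ENNReal.ofReal (b - a + 2 * r) :=
          (ENNReal.ofReal_lt_ofReal_iff (by linarith)).2 (by linarith)
      _ = volume (Ioo (a - r) (b + r)) := hv.symm
      _ ≤ _ := measure_mono hsub
  · rw [measure_union ?_ measurableSet_Ioo]
    · rw [Real.volume_Ioo, Real.volume_Ioo]
      have h1 : a + r - (a - r) = 2 * r := by ring
      have h2 : b + r - (b - r) = 2 * r := by ring
      rw [h1, h2, ← ENNReal.ofReal_add (by linarith) (by linarith)]
      exact ENNReal.ofReal_lt_ofReal_iff (by linarith) |>.2 (by linarith)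
    · rw [Set.disjoint_left]
      rintro y ⟨_, h2⟩ ⟨h3, _⟩
      linarith

lemma volume_three_balls {r s₁ s₂ s₃ : ℝ} (hr : 0 < r) (h12 : s₁ + 2 * r ≤ s₂)
    (h23 : s₂ + 2 * r ≤ s₃) :
    ENNReal.ofReal (6 * r) ≤
      volume (Ioo (s₁ - r) (s₁ + r) ∪ (Ioo (s₂ - r) (s₂ + r) ∪ Ioo (s₃ - r) (s₃ + r))) := by
  rw [measure_union ?_ (MeasurableSet.union measurableSet_Ioo measurableSet_Ioo),
    measure_union ?_ measurableSet_Ioo]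
  · rw [Real.volume_Ioo, Real.volume_Ioo, Real.volume_Ioo,
      ← ENNReal.ofReal_add (by linarith) (by linarith),
      ← ENNReal.ofReal_add (by linarith) (by linarith)]
    exact ENNReal.ofReal_le_ofReal (by linarith)
  · rw [Set.disjoint_left]
    rintro y ⟨_, h2⟩ ⟨h3, _⟩
    linarith
  · rw [Set.disjoint_left]
    rintro y ⟨_, h2⟩ hy
    rcases hy with ⟨h3, _⟩ | ⟨h3, _⟩ <;> linarith

/-- a set with no frontier point in a preconnected open set is trivial there -/
lemma clopen_in {D U : Set ℝ} (hU : IsOpen U) (hc : IsPreconnected U)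
    (hf : frontier D ∩ U = ∅) : D ∩ U = ∅ ∨ U ⊆ D := by
  have hmem : ∀ x ∈ U, x ∈ closure D → x ∈ interior D := by
    intro x hxU hxc
    by_contra hxi
    exact absurd (hf ▸ (⟨⟨hxc, hxi⟩, hxU⟩ : x ∈ frontier D ∩ U)) (notMem_empty x)
  by_cases h1 : (U ∩ interior D).Nonempty
  · right
    by_cases h2 : (U ∩ (closure D)ᶜ).Nonempty
    · exfalso
      have hcover : U ⊆ interior D ∪ (closure D)ᶜ := by
        intro x hx
        by_cases hxc : x ∈ closure D
        · exact Or.inl (hmem x hx hxc)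
        · exact Or.inr hxc
      obtain ⟨y, -, hy1, hy2⟩ :=
        hc (interior D) (closure D)ᶜ isOpen_interior isClosed_closure.isOpen_compl hcover h1 h2
      exact hy2 (interior_subset_closure hy1)
    · intro x hx
      have hxc : x ∈ closure D := by
        by_contra h
        exact h2 ⟨x, hx, h⟩
      exact interior_subset (hmem x hx hxc)
  · left
    rw [eq_empty_iff_forall_notMem]
    rintro x ⟨hxD, hxU⟩
    exact h1 ⟨x, hxU, hmem x hxU (subset_closure hxD)⟩

lemma volume_inter_closedBall_eq {E : Set ℝ} {x ρ : ℝ} (hρ : 0 < ρ) :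
    volume (E ∩ closedBall x ρ) = volume (E ∩ ball x ρ) := by
  refine le_antisymm ?_ (measure_mono (inter_subset_inter_right E ball_subset_closedBall))
  have hsub : E ∩ closedBall x ρ ⊆ (E ∩ ball x ρ) ∪ ({x - ρ, x + ρ} : Set ℝ) := by
    rintro y ⟨hyE, hyc⟩
    by_cases hb : y ∈ ball x ρ
    · exact Or.inl ⟨hyE, hb⟩
    · right
      rw [mem_closedBall, Real.dist_eq] at hyc
      rw [mem_ball, Real.dist_eq, not_lt] at hb
      have : |y - x| = ρ := le_antisymm hyc hb
      rcases abs_eq (le_of_lt hρ) |>.1 this with h | h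
      · have hy : y = x + ρ := by linarith
        simp [hy]
      · have hy : y = x - ρ := by linarith
        simp [hy]
  calc volume (E ∩ closedBall x ρ) ≤ volume ((E ∩ ball x ρ) ∪ ({x - ρ, x + ρ} : Set ℝ)) :=
        measure_mono hsub
    _ ≤ volume (E ∩ ball x ρ) + volume ({x - ρ, x + ρ} : Set ℝ) := measure_union_le _ _
    _ = volume (E ∩ ball x ρ) := by
        rw [(Set.toFinite ({x - ρ, x + ρ} : Set ℝ)).measure_zero volume, add_zero]

/-- Lebesgue density theorem, stated for `dens1`. -/
lemma ae_eq_dens1 (E : Set ℝ) (hE : MeasurableSet E) : E =ᵐ[volume] dens1 E := by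
  have hb := Besicovitch.ae_tendsto_measure_inter_div_of_measurableSet volume hE
  filter_upwards [hb] with x hx
  have hxball : Tendsto (fun ρ : ℝ => volume (E ∩ ball x ρ) / volume (ball x ρ)) (𝓝[>] (0:ℝ))
      (𝓝 (E.indicator 1 x)) := by
    refine (Filter.tendsto_congr' ?_).1 hx
    filter_upwards [self_mem_nhdsWithin] with ρ (hρ : 0 < ρ)
    rw [volume_inter_closedBall_eq hρ, Real.volume_closedBall, Real.volume_ball]
  show (x ∈ E) = (x ∈ dens1 E)
  apply propext
  constructor
  · intro hxE
    have : E.indicator (1 : ℝ → ℝ≥0∞) x = 1 := by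
      rw [indicator_of_mem hxE]; rfl
    rw [this] at hxball
    exact hxball
  · intro hxd
    by_contra hxE
    have : E.indicator (1 : ℝ → ℝ≥0∞) x = 0 := indicator_of_notMem hxE _
    rw [this] at hxball
    exact one_ne_zero (tendsto_nhds_unique (hxd : Tendsto _ _ _) hxball)

theorem core (r : ℝ) (hr : 0 < r) (E : Set ℝ) (hE : MeasurableSet E)
    (hm : ∀ c ρ : ℝ, r < ρ → ∀ F : Set ℝ, MeasurableSet F →
      F \ Icc (c - (ρ - r)) (c + (ρ - r)) = E \ Icc (c - (ρ - r)) (c + (ρ - r)) →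
      volume (thickening r (frontier (dens1 E)) ∩ Ioo (c - ρ) (c + ρ)) ≤
        volume (thickening r (frontier (dens1 F)) ∩ Ioo (c - ρ) (c + ρ))) :
    volume E = 0 ∨ volume Eᶜ = 0 ∨ ∃ a : ℝ, E =ᵐ[volume] Ioi a ∨ E =ᵐ[volume] Iio a := by
  have hED : E =ᵐ[volume] dens1 E := ae_eq_dens1 E hE
  have hED1 : volume (E \ dens1 E) = 0 := (ae_eq_set.1 hED).1
  have hED2 : volume (dens1 E \ E) = 0 := (ae_eq_set.1 hED).2
  set D := dens1 E with hDdef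
  set S := frontier D with hSdef
  -- Step 1 : global bound on the perimeter in any window
  have hb : ∀ c ρ : ℝ, r < ρ →
      volume (thickening r S ∩ Ioo (c - ρ) (c + ρ)) ≤ ENNReal.ofReal (4 * r) := by
    intro c ρ hρ
    set m := ρ - r with hmdef
    have hm0 : 0 < m := by rw [hmdef]; linarith
    have hcond : (E ∪ Icc (c - m) (c + m)) \ Icc (c - (ρ - r)) (c + (ρ - r)) =
        E \ Icc (c - (ρ - r)) (c + (ρ - r)) := by
      rw [← hmdef]; exact union_diff_right
    have hmain := hm c ρ hρ _ (hE.union measurableSet_Icc) hcond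
    have hmid : frontier (dens1 (E ∪ Icc (c - m) (c + m))) ∩ Ioo (c - m) (c + m) = ∅ := by
      have hsub : Ioo (c - m) (c + m) ⊆ interior (dens1 (E ∪ Icc (c - m) (c + m))) := by
        refine interior_maximal ?_ isOpen_Ioo
        intro y hy
        rw [mem_Ioo] at hy
        refine mem_dens1_of_ball_subset (δ := min (y - (c - m)) ((c + m) - y))
          (lt_min (by linarith) (by linarith)) ?_
        intro z hz
        rw [mem_ball, Real.dist_eq, abs_lt] at hz
        have hmin1 : min (y - (c - m)) ((c + m) - y) ≤ y - (c - m) := min_le_left _ _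
        have hmin2 : min (y - (c - m)) ((c + m) - y) ≤ (c + m) - y := min_le_right _ _
        right
        rw [mem_Icc]
        exact ⟨by linarith [hz.1], by linarith [hz.2]⟩
      rw [eq_empty_iff_forall_notMem]
      rintro y ⟨hyf, hyI⟩
      exact hyf.2 (hsub hyI)
    have hwin := thickening_windows (r := r) hmid
    have e1 : c - ρ = c - m - r := by rw [hmdef]; ring
    have e2 : c + ρ = c + m + r := by rw [hmdef]; ring
    calc volume (thickening r S ∩ Ioo (c - ρ) (c + ρ))
        ≤ volume (thickening r (frontier (dens1 (E ∪ Icc (c - m) (c + m)))) ∩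
            Ioo (c - ρ) (c + ρ)) := hmain
      _ ≤ volume (Ioo (c - m - r) (c - m + r) ∪ Ioo (c + m - r) (c + m + r)) := by
          rw [e1, e2]; exact measure_mono hwin
      _ ≤ ENNReal.ofReal (4 * r) := volume_windows hr.le
  -- Step 2 : S cannot contain three spread points
  have h3 : ∀ {s₁ s₂ s₃ : ℝ}, s₁ ∈ S → s₂ ∈ S → s₃ ∈ S →
      s₁ + 2 * r ≤ s₂ → s₂ + 2 * r ≤ s₃ → False := by
    intro s₁ s₂ s₃ hs₁ hs₂ hs₃ h12 h23
    set c := s₂ with hcdef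
    set ρ := s₃ - s₁ + 2 * r with hρdef
    have hρ : r < ρ := by rw [hρdef]; linarith
    have hsub : Ioo (s₁ - r) (s₁ + r) ∪ (Ioo (s₂ - r) (s₂ + r) ∪ Ioo (s₃ - r) (s₃ + r)) ⊆
        thickening r S ∩ Ioo (c - ρ) (c + ρ) := by
      intro y hy
      constructor
      · rcases hy with h | h | h <;>
        · rw [← Real.ball_eq_Ioo] at h
          first
            | exact ball_subset_thickening hs₁ r h
            | exact ball_subset_thickening hs₂ r h
            | exact ball_subset_thickening hs₃ r h
      · rw [mem_Ioo]
        rw [hcdef, hρdef]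
        rcases hy with h | h | h <;> rw [mem_Ioo] at h <;> constructor <;> linarith [h.1, h.2]
    have hchain := le_trans (volume_three_balls hr h12 h23)
      (le_trans (measure_mono hsub) (hb c ρ hρ))
    have := (ENNReal.ofReal_le_ofReal_iff (by linarith)).1 hchain
    linarith
  -- Step 3 : boundedness of S
  have hbddA : BddAbove S := by
    by_contra h
    rw [not_bddAbove_iff] at h
    obtain ⟨s₁, hs₁, -⟩ := h 0
    obtain ⟨s₂, hs₂, h12⟩ := h (s₁ + 2 * r)
    obtain ⟨s₃, hs₃, h23⟩ := h (s₂ + 2 * r)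
    exact h3 hs₁ hs₂ hs₃ h12.le h23.le
  have hbddB : BddBelow S := by
    by_contra h
    rw [not_bddBelow_iff] at h
    obtain ⟨s₁, hs₁, -⟩ := h 0
    obtain ⟨s₂, hs₂, h12⟩ := h (s₁ - 2 * r)
    obtain ⟨s₃, hs₃, h23⟩ := h (s₂ - 2 * r)
    exact h3 hs₃ hs₂ hs₁ (by linarith) (by linarith)
  by_cases hSne : S = ∅
  · have hclopen : IsClopen D := isClopen_iff_frontier_eq_empty.2 hSne
    rcases isClopen_iff.1 hclopen with h | h
    · left
      rw [measure_congr hED, h, measure_empty]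
    · right; left
      have hc : Eᶜ =ᵐ[volume] Dᶜ := ae_eq_set_compl_compl.2 hED
      rw [(measure_congr hc : volume Eᶜ = volume Dᶜ), h, compl_univ, measure_empty]
  · have hSne' : S.Nonempty := nonempty_iff_ne_empty.2 hSne
    have hSclosed : IsClosed S := isClosed_frontier
    set a := sInf S with hadef
    set b := sSup S with hbdef
    have haS : a ∈ S := hSclosed.csInf_mem hSne' hbddB
    have hbS : b ∈ S := hSclosed.csSup_mem hSne' hbddA
    have hab : a ≤ b := le_csSup hbddA haS
    have hfrIio : frontier D ∩ Iio a = ∅ := by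
      rw [eq_empty_iff_forall_notMem]
      rintro y ⟨hyS, hy⟩
      exact absurd (csInf_le hbddB hyS) (not_le.2 hy)
    have hfrIoi : frontier D ∩ Ioi b = ∅ := by
      rw [eq_empty_iff_forall_notMem]
      rintro y ⟨hyS, hy⟩
      exact absurd (le_csSup hbddA hyS) (not_le.2 hy)
    have hleft := clopen_in isOpen_Iio isPreconnected_Iio hfrIio
    have hright := clopen_in isOpen_Ioi isPreconnected_Ioi hfrIoi
    set c := (a + b) / 2 with hcdef
    set ρ := (b - a) + 3 * r with hρdef
    set m := (b - a) + 2 * r with hmdef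
    have hρr : r < ρ := by rw [hρdef]; linarith
    have hmρ : c - (ρ - r) = c - m ∧ c + (ρ - r) = c + m := by
      constructor <;> (rw [hρdef, hmdef]; ring)
    have hcm1 : c - m ≤ a - 2 * r := by rw [hcdef, hmdef]; linarith
    have hcm2 : b + 2 * r ≤ c + m := by rw [hcdef, hmdef]; linarith
    have hcρ1 : c - ρ ≤ a - 3 * r := by rw [hcdef, hρdef]; linarith
    have hcρ2 : b + 3 * r ≤ c + ρ := by rw [hcdef, hρdef]; linarith
    have hball_a : Ioo (a - r) (a + r) ⊆ Ioo (c - ρ) (c + ρ) := by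
      intro y hy; rw [mem_Ioo] at *
      constructor <;> [linarith [hy.1]; linarith [hy.2]]
    have hball_b : Ioo (b - r) (b + r) ⊆ Ioo (c - ρ) (c + ρ) := by
      intro y hy; rw [mem_Ioo] at *
      constructor <;> [linarith [hy.1]; linarith [hy.2]]
    have hthick_a : Ioo (a - r) (a + r) ⊆ thickening r S ∩ Ioo (c - ρ) (c + ρ) := by
      intro y hy
      refine ⟨?_, hball_a hy⟩
      rw [← Real.ball_eq_Ioo] at hy
      exact ball_subset_thickening haS r hy
    have hthick_b : Ioo (b - r) (b + r) ⊆ thickening r S ∩ Ioo (c - ρ) (c + ρ) := by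
      intro y hy
      refine ⟨?_, hball_b hy⟩
      rw [← Real.ball_eq_Ioo] at hy
      exact ball_subset_thickening hbS r hy
    have hLB1 : ENNReal.ofReal (2 * r) ≤ volume (thickening r S ∩ Ioo (c - ρ) (c + ρ)) := by
      calc ENNReal.ofReal (2 * r) = volume (Ioo (a - r) (a + r)) := by
            rw [Real.volume_Ioo]; congr 1; ring
        _ ≤ _ := measure_mono hthick_a
    -- a helper to derive the contradiction when the competitor has empty frontier
    have hcontr0 : ∀ F : Set ℝ, MeasurableSet F →
        F \ Icc (c - (ρ - r)) (c + (ρ - r)) = E \ Icc (c - (ρ - r)) (c + (ρ - r)) →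
        frontier (dens1 F) = ∅ → False := by
      intro F hFm hFcond hFfr
      have hmain := hm c ρ hρr F hFm hFcond
      rw [hFfr, thickening_empty, empty_inter, measure_empty] at hmain
      have h0 := le_trans hLB1 hmain
      rw [le_zero_iff, ENNReal.ofReal_eq_zero] at h0
      linarith
    -- a helper for the halfline competitors
    have hcontr1 : a < b → ∀ F : Set ℝ, MeasurableSet F →
        F \ Icc (c - (ρ - r)) (c + (ρ - r)) = E \ Icc (c - (ρ - r)) (c + (ρ - r)) →
        (∃ t : ℝ, frontier (dens1 F) = {t}) → False := by
      intro hab' F hFm hFcond hFfr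
      obtain ⟨t, ht⟩ := hFfr
      have hmain := hm c ρ hρr F hFm hFcond
      rw [ht, thickening_singleton] at hmain
      have hRHS : volume (Ioo (t - r) (t + r) ∩ Ioo (c - ρ) (c + ρ)) ≤ ENNReal.ofReal (2 * r) := by
        calc volume (Ioo (t - r) (t + r) ∩ Ioo (c - ρ) (c + ρ)) ≤ volume (Ioo (t - r) (t + r)) :=
              measure_mono inter_subset_left
          _ = ENNReal.ofReal (2 * r) := by rw [Real.volume_Ioo]; congr 1; ring
      have hLB2 : ENNReal.ofReal (2 * r) < volume (thickening r S ∩ Ioo (c - ρ) (c + ρ)) := by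
        calc ENNReal.ofReal (2 * r) < volume (Ioo (a - r) (a + r) ∪ Ioo (b - r) (b + r)) :=
              volume_two_balls hr hab'
          _ ≤ _ := measure_mono (union_subset hthick_a hthick_b)
      exact absurd (le_trans hmain hRHS) (not_le.2 hLB2)
    rcases hleft with hl | hl <;> rcases hright with hr2 | hr2
    · -- D vanishes on both sides : competitor E \ Icc
      exfalso
      have hDsub : D ⊆ Icc a b := by
        intro y hyD
        rw [mem_Icc]
        constructor
        · by_contra hya
          exact absurd (hl ▸ (⟨hyD, not_le.1 hya⟩ : y ∈ D ∩ Iio a)) (notMem_empty y)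
        · by_contra hyb
          exact absurd (hr2 ▸ (⟨hyD, not_le.1 hyb⟩ : y ∈ D ∩ Ioi b)) (notMem_empty y)
      have hFnull : volume (E \ Icc (c - m) (c + m)) = 0 := by
        refine measure_mono_null (fun y hy => ?_) (measure_union_null hED1 (?_ : volume (D \ Icc (c - m) (c + m)) = 0))
        · obtain ⟨hyE, hyI⟩ := hy
          by_cases hyD : y ∈ D
          · exact Or.inr ⟨hyD, hyI⟩
          · exact Or.inl ⟨hyE, hyD⟩
        · have : D \ Icc (c - m) (c + m) = ∅ := by
            rw [eq_empty_iff_forall_notMem]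
            rintro y ⟨hyD, hyI⟩
            have := hDsub hyD
            rw [mem_Icc] at this
            exact hyI ⟨by linarith [this.1], by linarith [this.2]⟩
          rw [this, measure_empty]
      refine hcontr0 (E \ Icc (c - m) (c + m)) (hE.diff measurableSet_Icc) ?_ ?_
      · rw [hmρ.1, hmρ.2, diff_diff, union_self]
      · rw [dens1_congr (ae_eq_empty.2 hFnull), dens1_empty, frontier_empty]
    · -- D vanishes below a, full above b
      rcases eq_or_lt_of_le hab with heq | hab'
      · -- halfline Ioi a
        right; right
        refine ⟨a, Or.inl (ae_eq_set.2 ⟨?_, ?_⟩)⟩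
        · refine measure_mono_null (t := (E \ D) ∪ {a}) (fun y hy => ?_)
            (measure_union_null hED1 (measure_singleton a))
          obtain ⟨hyE, hyI⟩ := hy
          simp only [mem_Ioi, not_lt] at hyI
          by_cases hyD : y ∈ D
          · right
            rcases lt_or_eq_of_le hyI with h | h
            · exact absurd (hl ▸ (⟨hyD, h⟩ : y ∈ D ∩ Iio a)) (notMem_empty y)
            · exact h
          · exact Or.inl ⟨hyE, hyD⟩
        · refine measure_mono_null (fun y hy => ?_) hED2
          obtain ⟨hyI, hyE⟩ := hy
          refine ⟨hr2 ?_, hyE⟩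
          rw [mem_Ioi] at hyI ⊢
          rw [← heq]
          exact hyI
      · -- competitor E ∪ Icc  ≈  Ioi (c - m)
        exfalso
        have hFae : ((E ∪ Icc (c - m) (c + m) : Set ℝ) : Set ℝ) =ᵐ[volume] (Ioi (c - m) : Set ℝ) := by
          refine ae_eq_set.2 ⟨?_, ?_⟩
          · refine measure_mono_null (t := (E \ D) ∪ {c - m}) (fun y hy => ?_)
              (measure_union_null hED1 (measure_singleton (c - m)))
            obtain ⟨hyF, hyI⟩ := hy
            simp only [mem_Ioi, not_lt] at hyI
            rcases hyF with hyE | hyIcc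
            · by_cases hyD : y ∈ D
              · exfalso
                have hya : y < a := by linarith [hcm1]
                exact absurd (hl ▸ (⟨hyD, hya⟩ : y ∈ D ∩ Iio a)) (notMem_empty y)
              · exact Or.inl ⟨hyE, hyD⟩
            · right
              rw [mem_Icc] at hyIcc
              exact le_antisymm hyI hyIcc.1
          · refine measure_mono_null (fun y hy => ?_) hED2
            obtain ⟨hyI, hyF⟩ := hy
            rw [mem_Ioi] at hyI
            simp only [mem_union, not_or] at hyF
            obtain ⟨hyE, hyIcc⟩ := hyF
            rw [mem_Icc, not_and_or, not_le, not_le] at hyIcc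
            rcases hyIcc with h | h
            · linarith
            · exact ⟨hr2 (by rw [mem_Ioi]; linarith [hcm2]), hyE⟩
        refine hcontr1 hab' (E ∪ Icc (c - m) (c + m)) (hE.union measurableSet_Icc) ?_
          ⟨c - m, ?_⟩
        · rw [hmρ.1, hmρ.2]; exact union_diff_right
        · rw [dens1_congr hFae, dens1_Ioi, frontier_Ioi]
    · -- D full below a, vanishes above b
      rcases eq_or_lt_of_le hab with heq | hab'
      · right; right
        refine ⟨a, Or.inr (ae_eq_set.2 ⟨?_, ?_⟩)⟩
        · refine measure_mono_null (t := (E \ D) ∪ {a}) (fun y hy => ?_)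
            (measure_union_null hED1 (measure_singleton a))
          obtain ⟨hyE, hyI⟩ := hy
          simp only [mem_Iio, not_lt] at hyI
          by_cases hyD : y ∈ D
          · right
            rcases lt_or_eq_of_le hyI with h | h
            · have : y ∈ D ∩ Ioi b := ⟨hyD, by rw [mem_Ioi, ← heq]; exact h⟩
              exact absurd (hr2 ▸ this) (notMem_empty y)
            · exact h.symm
          · exact Or.inl ⟨hyE, hyD⟩
        · refine measure_mono_null (fun y hy => ?_) hED2
          obtain ⟨hyI, hyE⟩ := hy
          exact ⟨hl hyI, hyE⟩
      · exfalso
        have hFae : ((E ∪ Icc (c - m) (c + m) : Set ℝ) : Set ℝ) =ᵐ[volume] (Iio (c + m) : Set ℝ) := by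
          refine ae_eq_set.2 ⟨?_, ?_⟩
          · refine measure_mono_null (t := (E \ D) ∪ {c + m}) (fun y hy => ?_)
              (measure_union_null hED1 (measure_singleton (c + m)))
            obtain ⟨hyF, hyI⟩ := hy
            simp only [mem_Iio, not_lt] at hyI
            rcases hyF with hyE | hyIcc
            · by_cases hyD : y ∈ D
              · exfalso
                have hyb : y ∈ D ∩ Ioi b := ⟨hyD, by rw [mem_Ioi]; linarith [hcm2]⟩
                exact absurd (hr2 ▸ hyb) (notMem_empty y)
              · exact Or.inl ⟨hyE, hyD⟩
            · right
              rw [mem_Icc] at hyIcc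
              exact le_antisymm hyIcc.2 hyI
          · refine measure_mono_null (fun y hy => ?_) hED2
            obtain ⟨hyI, hyF⟩ := hy
            rw [mem_Iio] at hyI
            simp only [mem_union, not_or] at hyF
            obtain ⟨hyE, hyIcc⟩ := hyF
            rw [mem_Icc, not_and_or, not_le, not_le] at hyIcc
            rcases hyIcc with h | h
            · exact ⟨hl (by rw [mem_Iio]; linarith [hcm1]), hyE⟩
            · linarith
        refine hcontr1 hab' (E ∪ Icc (c - m) (c + m)) (hE.union measurableSet_Icc) ?_
          ⟨c + m, ?_⟩
        · rw [hmρ.1, hmρ.2]; exact union_diff_right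
        · rw [dens1_congr hFae, dens1_Iio, frontier_Iio]
    · -- D full on both sides : competitor E ∪ Icc ≈ univ
      exfalso
      have hFcompl : volume (E ∪ Icc (c - m) (c + m))ᶜ = 0 := by
        refine measure_mono_null (fun y hy => ?_) hED2
        rw [mem_compl_iff] at hy
        simp only [mem_union, not_or] at hy
        obtain ⟨hyE, hyIcc⟩ := hy
        rw [mem_Icc, not_and_or, not_le, not_le] at hyIcc
        rcases hyIcc with h | h
        · exact ⟨hl (by rw [mem_Iio]; linarith [hcm1]), hyE⟩
        · exact ⟨hr2 (by rw [mem_Ioi]; linarith [hcm2]), hyE⟩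
      refine hcontr0 (E ∪ Icc (c - m) (c + m)) (hE.union measurableSet_Icc) ?_ ?_
      · rw [hmρ.1, hmρ.2]; exact union_diff_right
      · rw [dens1_congr (ae_eq_univ.2 hFcompl), dens1_univ, frontier_univ]

/-- The isometric identification of `EuclideanSpace ℝ (Fin 1)` with `ℝ`. -/
def eIso : EuclideanSpace ℝ (Fin 1) ≃ᵢ ℝ where
  toFun x := x 0
  invFun t := WithLp.toLp 2 (fun _ => t)
  left_inv x := by
    ext i
    have : i = 0 := Subsingleton.elim i 0
    rw [this]
  right_inv t := rfl
  isometry_toFun := Isometry.of_dist_eq fun x y => by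
    rw [Real.dist_eq, EuclideanSpace.dist_eq, Fin.sum_univ_one, Real.sqrt_sq_eq_abs,
      Real.dist_eq]
    exact (abs_abs (x 0 - y 0)).symm

lemma eIso_measurePreserving : MeasurePreserving (eIso : EuclideanSpace ℝ (Fin 1) → ℝ)
    volume volume := by
  have h := (volume_preserving_funUnique (Fin 1) ℝ).comp
    (EuclideanSpace.volume_preserving_symm_measurableEquiv_toLp (Fin 1))
  have heq : (⇑(MeasurableEquiv.funUnique (Fin 1) ℝ) ∘ ⇑(MeasurableEquiv.toLp 2 (Fin 1 → ℝ)).symm)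
      = ⇑eIso := rfl
  rwa [heq] at h

lemma eIso_symm_measurePreserving :
    MeasurePreserving (eIso.symm : ℝ → EuclideanSpace ℝ (Fin 1)) volume volume := by
  have h := ((EuclideanSpace.volume_preserving_symm_measurableEquiv_toLp (Fin 1)).symm).comp
    ((volume_preserving_funUnique (Fin 1) ℝ).symm)
  have heq : (⇑(MeasurableEquiv.toLp 2 (Fin 1 → ℝ)).symm.symm ∘
      ⇑(MeasurableEquiv.funUnique (Fin 1) ℝ).symm) = ⇑eIso.symm := rfl
  rwa [heq] at h

lemma eIso_preimage_ball (x : EuclideanSpace ℝ (Fin 1)) (ρ : ℝ) :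
    ball x ρ = ⇑eIso ⁻¹' (ball (eIso x) ρ) := by
  rw [IsometryEquiv.preimage_ball, IsometryEquiv.symm_apply_apply]

lemma eIso_preimage_frontier (A : Set ℝ) :
    frontier (⇑eIso ⁻¹' A) = ⇑eIso ⁻¹' (frontier A) :=
  (eIso.toHomeomorph.preimage_frontier A).symm

lemma eIso_infEdist (y : EuclideanSpace ℝ (Fin 1)) (A : Set ℝ) :
    Metric.infEDist y (⇑eIso ⁻¹' A) = Metric.infEDist (eIso y) A := by
  have h1 : ⇑eIso ⁻¹' A = ⇑eIso.symm '' A := by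
    rw [← IsometryEquiv.image_symm]
  rw [h1]
  have h2 := EMetric.infEdist_image (x := eIso y) (t := A) eIso.symm.isometry
  simpa using h2

lemma eIso_infDist (y : EuclideanSpace ℝ (Fin 1)) (A : Set ℝ) :
    infDist y (⇑eIso ⁻¹' A) = infDist (eIso y) A := by
  rw [infDist, infDist, eIso_infEdist]

lemma eIso_preimage_thickening (r : ℝ) (A : Set ℝ) :
    thickening r (⇑eIso ⁻¹' A) = ⇑eIso ⁻¹' (thickening r A) := by
  ext y
  rw [mem_preimage, mem_thickening_iff_infEdist_lt, mem_thickening_iff_infEdist_lt,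
    eIso_infEdist]

lemma eIso_volume_preimage (A : Set ℝ) (hA : NullMeasurableSet A volume) :
    volume (⇑eIso ⁻¹' A) = volume A :=
  eIso_measurePreserving.measure_preimage hA

/-- transfer of the density points. -/
lemma densityOnePoints_transfer (A : Set ℝ) (hA : MeasurableSet A) :
    densityOnePoints 1 (⇑eIso ⁻¹' A) = ⇑eIso ⁻¹' (dens1 A) := by
  ext x
  have hfn : ∀ ρ : ℝ, volume (⇑eIso ⁻¹' A ∩ ball x ρ) / volume (ball x ρ)
      = volume (A ∩ ball (eIso x) ρ) / volume (ball (eIso x) ρ) := by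
    intro ρ
    rw [eIso_preimage_ball x ρ, ← preimage_inter,
      eIso_volume_preimage _ ((hA.inter measurableSet_ball).nullMeasurableSet),
      eIso_volume_preimage _ measurableSet_ball.nullMeasurableSet]
  simp only [densityOnePoints, dens1, mem_preimage, mem_setOf_eq]
  exact tendsto_congr (fun ρ => hfn ρ) |>.trans Iff.rfl

/-- transfer of the inner domain of a ball. -/
lemma innerDomain_transfer (r : ℝ) (hr : 0 < r) (x : EuclideanSpace ℝ (Fin 1)) (ρ : ℝ)
    (hρ : r < ρ) :
    innerDomain 1 r (ball x ρ) =
      ⇑eIso ⁻¹' (Icc (eIso x - (ρ - r)) (eIso x + (ρ - r))) := by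
  have hρ0 : 0 < ρ := lt_trans hr hρ
  have hball : ball x ρ = ⇑eIso ⁻¹' (Ioo (eIso x - ρ) (eIso x + ρ)) := by
    rw [eIso_preimage_ball x ρ, Real.ball_eq_Ioo]
  have hfr : frontier (ball x ρ) = ⇑eIso ⁻¹' ({eIso x - ρ, eIso x + ρ} : Set ℝ) := by
    rw [hball, eIso_preimage_frontier, frontier_Ioo (by linarith)]
  ext y
  simp only [innerDomain, mem_setOf_eq, mem_preimage, mem_Icc]
  rw [hfr, eIso_infDist, hball, mem_preimage, mem_Ioo]
  set t := eIso y with htdef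
  set p := eIso x - ρ
  set q := eIso x + ρ
  constructor
  · rintro ⟨⟨h1, h2⟩, h3⟩
    have hp : r ≤ dist t p := le_trans h3 (infDist_le_dist_of_mem (by simp))
    have hq : r ≤ dist t q := le_trans h3 (infDist_le_dist_of_mem (by simp))
    rw [Real.dist_eq, abs_of_pos (by simp only [p] at h1 ⊢; linarith)] at hp
    rw [Real.dist_eq, abs_of_neg (by simp only [q] at h2 ⊢; linarith)] at hq
    constructor
    · simp only [p] at hp; linarith
    · simp only [q] at hq; linarith
  · rintro ⟨h1, h2⟩
    have ht1 : p < t := by simp only [p]; linarith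
    have ht2 : t < q := by simp only [q]; linarith
    refine ⟨⟨ht1, ht2⟩, ?_⟩
    by_contra hcon
    rw [not_le] at hcon
    obtain ⟨z, hz, hdz⟩ := (infDist_lt_iff (by simp)).1 hcon
    rcases hz with rfl | hz
    · rw [Real.dist_eq, abs_lt] at hdz
      simp only [p] at hdz
      obtain ⟨hd1, hd2⟩ := hdz
      linarith
    · rw [mem_singleton_iff] at hz
      subst hz
      rw [Real.dist_eq, abs_lt] at hdz
      simp only [q] at hdz
      obtain ⟨hd1, hd2⟩ := hdz
      linarith

lemma ennreal_le_of_div_le {a b c : ℝ≥0∞} (hc0 : c ≠ 0) (hct : c ≠ ∞)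
    (h : a / c ≤ b / c) : a ≤ b := by
  have := mul_le_mul_left h c
  rwa [ENNReal.div_mul_cancel hc0 hct, ENNReal.div_mul_cancel hc0 hct] at this

end CAux

/-- Classification of one-dimensional Class A minimizers: a Class A minimizer of `Per_r` in
dimension 1 is, up to a Lebesgue-null set, either empty, or all of `ℝ`, or a halfline
`(a, +∞)` or `(-∞, a)`. -/
theorem one_dimensional_classA (r : ℝ) (hr : 0 < r)
    (E : Set (EuclideanSpace ℝ (Fin 1))) (hE : MeasurableSet E)
    (hmin : ∀ (x : EuclideanSpace ℝ (Fin 1)) (ρ : ℝ), 0 < ρ →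
      IsMinimizerPerR 1 r E (ball x ρ)) :
    volume E = 0 ∨ volume Eᶜ = 0 ∨
    ∃ a : ℝ,
      volume ((E \ {x : EuclideanSpace ℝ (Fin 1) | a < x 0}) ∪
        ({x : EuclideanSpace ℝ (Fin 1) | a < x 0} \ E)) = 0 ∨
      volume ((E \ {x : EuclideanSpace ℝ (Fin 1) | x 0 < a}) ∪
        ({x : EuclideanSpace ℝ (Fin 1) | x 0 < a} \ E)) = 0 := by
  classical
  set Eℝ : Set ℝ := ⇑CAux.eIso.symm ⁻¹' E with hEℝdef
  have hEeq : ⇑CAux.eIso ⁻¹' Eℝ = E := by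
    rw [hEℝdef, ← preimage_comp]
    have : (⇑CAux.eIso.symm ∘ ⇑CAux.eIso) = id := by
      funext z
      exact CAux.eIso.symm_apply_apply z
    rw [this, preimage_id]
  have hEℝm : MeasurableSet Eℝ :=
    hE.preimage (CAux.eIso_symm_measurePreserving.measurable)
  have hmeas_thick : ∀ (A : Set ℝ) (c ρ : ℝ),
      NullMeasurableSet (thickening r (frontier (CAux.dens1 A)) ∩ Ioo (c - ρ) (c + ρ)) volume :=
    fun A c ρ => ((isOpen_thickening.measurableSet).inter measurableSet_Ioo).nullMeasurableSet
  have hper : ∀ (F : Set ℝ), MeasurableSet F → ∀ c ρ : ℝ,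
      perR 1 r (⇑CAux.eIso ⁻¹' F) (ball (CAux.eIso.symm c) ρ) =
        volume (thickening r (frontier (CAux.dens1 F)) ∩ Ioo (c - ρ) (c + ρ)) /
          ENNReal.ofReal (2 * r) := by
    intro F hF c ρ
    rw [perR, CAux.densityOnePoints_transfer F hF, CAux.eIso_preimage_frontier,
      CAux.eIso_preimage_thickening, CAux.eIso_preimage_ball (CAux.eIso.symm c) ρ,
      CAux.eIso.apply_symm_apply, ← preimage_inter,
      CAux.eIso_volume_preimage _
        (((isOpen_thickening.measurableSet).inter measurableSet_ball).nullMeasurableSet),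
      Real.ball_eq_Ioo]
  have hmR : ∀ c ρ : ℝ, r < ρ → ∀ F : Set ℝ, MeasurableSet F →
      F \ Icc (c - (ρ - r)) (c + (ρ - r)) = Eℝ \ Icc (c - (ρ - r)) (c + (ρ - r)) →
      volume (thickening r (frontier (CAux.dens1 Eℝ)) ∩ Ioo (c - ρ) (c + ρ)) ≤
        volume (thickening r (frontier (CAux.dens1 F)) ∩ Ioo (c - ρ) (c + ρ)) := by
    intro c ρ hρ F hF hcond
    have h2r0 : (ENNReal.ofReal (2 * r)) ≠ 0 := by
      simp only [ne_eq, ENNReal.ofReal_eq_zero, not_le]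
      linarith
    have h2rt : (ENNReal.ofReal (2 * r)) ≠ ∞ := ENNReal.ofReal_ne_top
    refine CAux.ennreal_le_of_div_le h2r0 h2rt ?_
    have hx := hmin (CAux.eIso.symm c) ρ (lt_trans hr hρ) (⇑CAux.eIso ⁻¹' F)
      (hF.preimage CAux.eIso_measurePreserving.measurable) ?_
    · rw [← hEeq] at hx
      rw [← hper Eℝ hEℝm c ρ, ← hper F hF c ρ]
      exact hx
    · rw [CAux.innerDomain_transfer r hr _ ρ hρ, CAux.eIso.apply_symm_apply, ← hEeq,
        ← preimage_diff, ← preimage_diff, hcond]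
  rcases CAux.core r hr Eℝ hEℝm hmR with h | h | ⟨a, h | h⟩
  · left
    rw [← hEeq, CAux.eIso_volume_preimage _ hEℝm.nullMeasurableSet]
    exact h
  · right; left
    rw [← hEeq, ← preimage_compl, CAux.eIso_volume_preimage _ hEℝm.compl.nullMeasurableSet]
    exact h
  · right; right
    refine ⟨a, Or.inl ?_⟩
    have hIoi : {x : EuclideanSpace ℝ (Fin 1) | a < x 0} = ⇑CAux.eIso ⁻¹' (Ioi a) := rfl
    obtain ⟨h1, h2⟩ := ae_eq_set.1 h
    rw [hIoi, ← hEeq, ← preimage_diff, ← preimage_diff, ← preimage_union,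
      CAux.eIso_volume_preimage _
        (((hEℝm.diff measurableSet_Ioi).union
          (measurableSet_Ioi.diff hEℝm)).nullMeasurableSet)]
    exact measure_union_null h1 h2
  · right; right
    refine ⟨a, Or.inr ?_⟩
    have hIio : {x : EuclideanSpace ℝ (Fin 1) | x 0 < a} = ⇑CAux.eIso ⁻¹' (Iio a) := rfl
    obtain ⟨h1, h2⟩ := ae_eq_set.1 h
    rw [hIio, ← hEeq, ← preimage_diff, ← preimage_diff, ← preimage_union,
      CAux.eIso_volume_preimage _
        (((hEℝm.diff measurableSet_Iio).union
          (measurableSet_Iio.diff hEℝm)).nullMeasurableSet)]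
    exact measure_union_null h1 h2
end
end

section
/- Nonlocal Poincaré–Wirtinger inequality: for every n ≥ 1 there exists a constant C > 0, depending only on n, such that the following holds. Let λ ≥ 1, R > 0 and r > 0 with r ≤ λR, and let u be a measurable function on B_{R+r} which is integrable on B_R. Set ⟨u⟩_R := (1/Lⁿ(B_R)) ∫_{B_R} u. Then ∫_{B_R} |u − ⟨u⟩_R| dx ≤ (C R λ / r) ∫_{B_R} osc_{B_r(x)} u dx (as an inequality in [0, ∞]). -/
open MeasureTheory Metric Set Filter Topology
open scoped RealInnerProductSpace ENNReal

noncomputable section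

/-- The oscillation `osc_{B_r(x)} u = esssup_{B_r(x)} u - essinf_{B_r(x)} u`, as an element
of `[0, ∞]`, expressed as the essential supremum of `u y - u z` over `B_r(x) × B_r(x)`. -/
def oscBall (n : ℕ) (r : ℝ) (u : EuclideanSpace ℝ (Fin n) → ℝ)
    (x : EuclideanSpace ℝ (Fin n)) : ℝ≥0∞ :=
  essSup (fun p : EuclideanSpace ℝ (Fin n) × EuclideanSpace ℝ (Fin n) =>
      ENNReal.ofReal (u p.1 - u p.2))
    ((volume.restrict (ball x r)).prod (volume.restrict (ball x r)))

namespace PW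

abbrev EE (n : ℕ) := EuclideanSpace ℝ (Fin n)

variable {n : ℕ}

lemma meas_phi {u : EE n → ℝ} (hu : Measurable u) :
    Measurable (fun p : EE n × EE n => ENNReal.ofReal |u p.1 - u p.2|) :=
  ENNReal.measurable_ofReal.comp ((hu.comp measurable_fst).sub (hu.comp measurable_snd)).abs

lemma ind_one_mul {α : Type*} [MeasurableSpace α] {μ : Measure α} {s : Set α}
    (hs : MeasurableSet s) (f : α → ℝ≥0∞) :
    ∫⁻ x in s, f x ∂μ = ∫⁻ x, s.indicator 1 x * f x ∂μ := by
  rw [← lintegral_indicator hs]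
  congr 1; ext x
  by_cases h : x ∈ s <;> simp [h]

lemma ind_ne_top {α : Type*} {s : Set α} (x : α) : s.indicator (1 : α → ℝ≥0∞) x ≠ ⊤ := by
  by_cases h : x ∈ s <;> simp [h]

/-- scaling of lintegral on Euclidean space -/
lemma lint_scale (f : EE n → ℝ≥0∞) (hf : Measurable f) {c : ℝ} (hc : 0 < c) :
    ∫⁻ x, f x = ENNReal.ofReal (c ^ n) * ∫⁻ x, f (c • x) := by
  have h1 : ∫⁻ x, f (c • x) = ∫⁻ y, f y ∂(Measure.map (c • ·) volume) :=
    (lintegral_map hf (measurable_const_smul c)).symm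
  rw [h1, Measure.map_addHaar_smul volume hc.ne', lintegral_smul_measure,
    finrank_euclideanSpace_fin, smul_eq_mul, ← mul_assoc, abs_of_nonneg (by positivity),
    ← ENNReal.ofReal_mul (by positivity), mul_inv_cancel₀ (by positivity),
    ENNReal.ofReal_one, one_mul]

lemma abs_split (a : ℝ) : ENNReal.ofReal |a| = ENNReal.ofReal a + ENNReal.ofReal (-a) := by
  rcases le_total 0 a with h | h
  · rw [abs_of_nonneg h,
      (ENNReal.ofReal_of_nonpos (neg_nonpos.mpr h) : ENNReal.ofReal (-a) = 0), add_zero]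
  · rw [abs_of_nonpos h,
      (ENNReal.ofReal_of_nonpos h : ENNReal.ofReal a = 0), zero_add]


/-- geometric lemma: small ball inside triple intersection -/
lemma geom {R r κ : ℝ} (hR : 0 < R) (hr : 0 < r) (hκr : κ ≤ r / 2) (hr4 : r ≤ 4 * R)
    {p k : EE n} (hp : p ∈ ball (0 : EE n) R) (hk : k ∈ ball (0 : EE n) κ) :
    volume (ball (0 : EE n) (r / 4)) ≤
      volume (ball (0 : EE n) R ∩ ball p r ∩ ball (p + k) r) := by
  rw [mem_ball_zero_iff] at hp hk
  set c : ℝ := r / (4 * R) with hc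
  have hc0 : 0 ≤ c := by positivity
  have hc1 : c ≤ 1 := by rw [hc, div_le_one (by positivity)]; linarith
  set p' : EE n := (1 - c) • p with hp'
  have hpp' : ‖p' - p‖ < r / 4 := by
    have : p' - p = (-c) • p := by rw [hp']; module
    rw [this, norm_smul, Real.norm_eq_abs, abs_neg, abs_of_nonneg hc0]
    calc c * ‖p‖ < c * R := by
          apply mul_lt_mul_of_pos_left hp
          rw [hc]; positivity
      _ = r / 4 := by rw [hc, div_mul_eq_mul_div, mul_div_mul_right _ _ hR.ne']
  have hp'n : ‖p'‖ ≤ (1 - c) * R := by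
    rw [hp', norm_smul, Real.norm_eq_abs, abs_of_nonneg (by linarith)]
    exact mul_le_mul_of_nonneg_left hp.le (by linarith)
  have hsub : ball p' (r / 4) ⊆ ball (0 : EE n) R ∩ ball p r ∩ ball (p + k) r := by
    intro z hz
    rw [mem_ball, dist_eq_norm] at hz
    have hzp : ‖z - p‖ < r / 2 := by
      calc ‖z - p‖ ≤ ‖z - p'‖ + ‖p' - p‖ := by
            have : z - p = (z - p') + (p' - p) := by abel
            rw [this]; exact norm_add_le _ _
        _ < r / 4 + r / 4 := by gcongr
        _ = r / 2 := by ring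
    refine ⟨⟨?_, ?_⟩, ?_⟩
    · rw [mem_ball_zero_iff]
      calc ‖z‖ ≤ ‖z - p'‖ + ‖p'‖ := by
            have : z = (z - p') + p' := by abel
            nth_rewrite 1 [this]; exact norm_add_le _ _
        _ < r / 4 + (1 - c) * R := add_lt_add_of_lt_of_le hz hp'n
        _ = R := by rw [hc, sub_mul, one_mul, div_mul_eq_mul_div, mul_div_mul_right _ _ hR.ne']; ring
    · rw [mem_ball, dist_eq_norm]; linarith
    · rw [mem_ball, dist_eq_norm]
      calc ‖z - (p + k)‖ ≤ ‖z - p‖ + ‖k‖ := by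
            have : z - (p + k) = (z - p) + (-k) := by abel
            rw [this]
            calc ‖z - p + -k‖ ≤ ‖z - p‖ + ‖-k‖ := norm_add_le _ _
              _ = ‖z - p‖ + ‖k‖ := by rw [norm_neg]
        _ < r / 2 + κ := by gcongr
        _ ≤ r := by linarith
  calc volume (ball (0 : EE n) (r / 4)) = volume (ball p' (r / 4)) :=
        (Measure.addHaar_ball_center volume p' (r / 4)).symm
    _ ≤ _ := measure_mono hsub

/-- pointwise oscillation bound -/
lemma upper {u : EE n → ℝ} (hu : Measurable u) {r : ℝ} (z' : EE n) :
    ∫⁻ p in ball z' r, ∫⁻ q in ball z' r, ENNReal.ofReal |u p - u q| ≤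
      2 * volume (ball (0 : EE n) r) ^ 2 * oscBall n r u z' := by
  set ν : Measure (EE n × EE n) :=
    ((volume : Measure (EE n)).restrict (ball z' r)).prod
      ((volume : Measure (EE n)).restrict (ball z' r)) with hν
  set ψ : EE n × EE n → ℝ≥0∞ := fun w => ENNReal.ofReal (u w.1 - u w.2) with hψ
  have hψm : Measurable ψ :=
    ENNReal.measurable_ofReal.comp ((hu.comp measurable_fst).sub (hu.comp measurable_snd))
  have h1 : ∫⁻ p in ball z' r, ∫⁻ q in ball z' r, ENNReal.ofReal |u p - u q| =
      ∫⁻ w, ENNReal.ofReal |u w.1 - u w.2| ∂ν :=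
    (lintegral_prod _ (meas_phi hu).aemeasurable).symm
  have h2 : ∀ w : EE n × EE n, ENNReal.ofReal |u w.1 - u w.2| = ψ w + ψ w.swap := by
    intro w; rw [hψ]; simp only [Prod.fst_swap, Prod.snd_swap]
    rw [abs_split]; congr 1; rw [neg_sub]
  have h3 : ∫⁻ w, ψ w.swap ∂ν = ∫⁻ w, ψ w ∂ν := by
    have h := lintegral_map (μ := ν) hψm measurable_swap
    rw [hν, Measure.prod_swap, ← hν] at h
    exact h.symm
  have h4 : ∫⁻ w, ψ w ∂ν ≤ volume (ball (0 : EE n) r) ^ 2 * oscBall n r u z' := by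
    calc ∫⁻ w, ψ w ∂ν ≤ ∫⁻ _, essSup ψ ν ∂ν := lintegral_mono_ae (ENNReal.ae_le_essSup ψ)
      _ = essSup ψ ν * ν univ := lintegral_const _
      _ = oscBall n r u z' * volume (ball (0 : EE n) r) ^ 2 := by
          congr 1
          rw [hν, ← Set.univ_prod_univ, Measure.prod_prod, Measure.restrict_apply_univ,
            Measure.addHaar_ball_center, sq]
      _ = volume (ball (0 : EE n) r) ^ 2 * oscBall n r u z' := mul_comm _ _
  calc ∫⁻ p in ball z' r, ∫⁻ q in ball z' r, ENNReal.ofReal |u p - u q|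
      = ∫⁻ w, (ψ w + ψ w.swap) ∂ν := by rw [h1]; congr 1; ext w; exact h2 w
    _ = ∫⁻ w, ψ w ∂ν + ∫⁻ w, ψ w.swap ∂ν :=
        lintegral_add_left' hψm.aemeasurable _
    _ = 2 * (∫⁻ w, ψ w ∂ν) := by rw [h3, two_mul]
    _ ≤ 2 * (volume (ball (0 : EE n) r) ^ 2 * oscBall n r u z') := by gcongr
    _ = 2 * volume (ball (0 : EE n) r) ^ 2 * oscBall n r u z' := by rw [mul_assoc]

def Gint (n : ℕ) (u : EE n → ℝ) (R κ : ℝ) : ℝ≥0∞ :=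
  ∫⁻ k, ∫⁻ z, (ball (0:EE n) κ).indicator 1 k * (ball (0:EE n) R).indicator 1 z *
    (ball (0:EE n) R).indicator 1 (z + k) * ENNReal.ofReal |u z - u (z + k)|

lemma ind_bound {R : ℝ} {N i : ℕ} (hN : 0 < N) (hi : i < N) (k z : EE n) (c : ℝ≥0∞) :
    (ball (0:EE n) R).indicator 1 (z - (i:ℝ) • k) *
      ((ball (0:EE n) R).indicator 1 (z + ((N:ℝ) - (i:ℝ)) • k) * c) ≤
    (ball (0:EE n) (2 * R / N)).indicator 1 k * (ball (0:EE n) R).indicator 1 z *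
      (ball (0:EE n) R).indicator 1 (z + k) * c := by
  by_cases h1 : z - (i:ℝ) • k ∈ ball (0:EE n) R
  case neg => simp [Set.indicator_of_notMem h1]
  by_cases h2 : z + ((N:ℝ) - (i:ℝ)) • k ∈ ball (0:EE n) R
  case neg => simp [Set.indicator_of_notMem h2]
  have h1' := h1; have h2' := h2
  rw [mem_ball_zero_iff] at h1' h2'
  have hNpos : (0:ℝ) < N := by exact_mod_cast hN
  have hiN : (i:ℝ) < N := by exact_mod_cast hi
  have hi1N : (i:ℝ) + 1 ≤ N := by exact_mod_cast Nat.succ_le_of_lt hi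
  have hi0 : (0:ℝ) ≤ i := by positivity
  have hR : 0 < R := lt_of_le_of_lt (norm_nonneg _) h1'
  have hkey : ((N:ℝ)) • k = (z + ((N:ℝ) - (i:ℝ)) • k) - (z - (i:ℝ) • k) := by module
  have hk : k ∈ ball (0:EE n) (2 * R / N) := by
    rw [mem_ball_zero_iff, lt_div_iff₀ hNpos]
    have h5 := norm_sub_le (z + ((N:ℝ) - (i:ℝ)) • k) (z - (i:ℝ) • k)
    rw [← hkey, norm_smul, Real.norm_eq_abs, abs_of_pos hNpos] at h5
    nlinarith [norm_nonneg k]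
  have hzid : (N:ℝ) • z =
      ((N:ℝ) - (i:ℝ)) • (z - (i:ℝ) • k) + (i:ℝ) • (z + ((N:ℝ) - (i:ℝ)) • k) := by module
  have hz : z ∈ ball (0:EE n) R := by
    rw [mem_ball_zero_iff]
    have hlt : (N:ℝ) * ‖z‖ < N * R := by
      calc (N:ℝ) * ‖z‖ = ‖(N:ℝ) • z‖ := by
            rw [norm_smul, Real.norm_eq_abs, abs_of_pos hNpos]
        _ ≤ ((N:ℝ) - i) * ‖z - (i:ℝ) • k‖ + (i:ℝ) * ‖z + ((N:ℝ) - i) • k‖ := by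
            rw [hzid]
            refine le_trans (norm_add_le _ _) ?_
            rw [norm_smul, norm_smul, Real.norm_eq_abs, Real.norm_eq_abs,
              abs_of_nonneg (by linarith), abs_of_nonneg hi0]
        _ < ((N:ℝ) - i) * R + (i:ℝ) * R := by
            apply add_lt_add_of_lt_of_le
            · exact mul_lt_mul_of_pos_left h1' (by linarith)
            · exact mul_le_mul_of_nonneg_left h2'.le hi0
        _ = (N:ℝ) * R := by ring
    exact lt_of_mul_lt_mul_left hlt hNpos.le
  have hzkid : (N:ℝ) • (z + k) =
      ((N:ℝ) - (i:ℝ) - 1) • (z - (i:ℝ) • k) + ((i:ℝ) + 1) • (z + ((N:ℝ) - (i:ℝ)) • k) := by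
    module
  have hzk : z + k ∈ ball (0:EE n) R := by
    rw [mem_ball_zero_iff]
    have hlt : (N:ℝ) * ‖z + k‖ < N * R := by
      calc (N:ℝ) * ‖z + k‖ = ‖(N:ℝ) • (z + k)‖ := by
            rw [norm_smul, Real.norm_eq_abs, abs_of_pos hNpos]
        _ ≤ ((N:ℝ) - i - 1) * ‖z - (i:ℝ) • k‖ + ((i:ℝ) + 1) * ‖z + ((N:ℝ) - i) • k‖ := by
            rw [hzkid]
            refine le_trans (norm_add_le _ _) ?_
            rw [norm_smul, norm_smul, Real.norm_eq_abs, Real.norm_eq_abs,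
              abs_of_nonneg (by linarith), abs_of_nonneg (by linarith)]
        _ < ((N:ℝ) - i - 1) * R + ((i:ℝ) + 1) * R := by
            apply add_lt_add_of_le_of_lt
            · exact mul_le_mul_of_nonneg_left h1'.le (by linarith)
            · exact mul_lt_mul_of_pos_left h2' (by linarith)
        _ = (N:ℝ) * R := by ring
    exact lt_of_mul_lt_mul_left hlt hNpos.le
  rw [Set.indicator_of_mem h1, Set.indicator_of_mem h2, Set.indicator_of_mem hk,
    Set.indicator_of_mem hz, Set.indicator_of_mem hzk]
  simp

lemma chainStep {u : EE n → ℝ} (hu : Measurable u) {R : ℝ}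
    {N i : ℕ} (hN : 0 < N) (hi : i < N) :
    ∫⁻ x in ball (0:EE n) R, ∫⁻ y in ball (0:EE n) R,
        ENNReal.ofReal |u (x + ((i:ℝ)/(N:ℝ)) • (y - x)) -
          u (x + (((i:ℝ)+1)/(N:ℝ)) • (y - x))| ≤
      ENNReal.ofReal ((N:ℝ) ^ n) * Gint n u R (2 * R / N) := by
  have hNpos : (0:ℝ) < N := by exact_mod_cast hN
  set B := ball (0:EE n) R with hB
  have hBm : MeasurableSet B := measurableSet_ball
  have harg : ∀ (c : ℝ) (k : EE n), (c/(N:ℝ)) • ((N:ℝ) • k) = c • k := by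
    intro c k; rw [smul_smul, div_mul_cancel₀ _ hNpos.ne']
  have hmF : ∀ x : EE n, Measurable (fun w : EE n =>
      B.indicator 1 x * (B.indicator 1 (x + w) *
        ENNReal.ofReal |u (x + ((i:ℝ)/(N:ℝ)) • w) - u (x + (((i:ℝ)+1)/(N:ℝ)) • w)|)) := by
    intro x
    refine measurable_const.mul (Measurable.mul ?_ ?_)
    · exact (measurable_one.indicator hBm).comp (measurable_id.const_add x)
    · exact ENNReal.measurable_ofReal.comp
        (((hu.comp ((measurable_id.const_smul ((i:ℝ)/(N:ℝ))).const_add x)).sub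
          (hu.comp ((measurable_id.const_smul (((i:ℝ)+1)/(N:ℝ))).const_add x))).abs)
  have e1 : ∫⁻ x in B, ∫⁻ y in B,
        ENNReal.ofReal |u (x + ((i:ℝ)/(N:ℝ)) • (y - x)) -
          u (x + (((i:ℝ)+1)/(N:ℝ)) • (y - x))| =
      ∫⁻ x, ∫⁻ y, B.indicator 1 x * (B.indicator 1 y *
        ENNReal.ofReal |u (x + ((i:ℝ)/(N:ℝ)) • (y - x)) -
          u (x + (((i:ℝ)+1)/(N:ℝ)) • (y - x))|) := by
    rw [ind_one_mul hBm]
    refine lintegral_congr fun x => ?_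
    rw [ind_one_mul hBm, ← lintegral_const_mul' _ _ (ind_ne_top x)]
  have e2 : ∀ x : EE n, ∫⁻ y, B.indicator 1 x * (B.indicator 1 y *
        ENNReal.ofReal |u (x + ((i:ℝ)/(N:ℝ)) • (y - x)) -
          u (x + (((i:ℝ)+1)/(N:ℝ)) • (y - x))|) =
      ENNReal.ofReal ((N:ℝ) ^ n) * ∫⁻ k, B.indicator 1 x *
        (B.indicator 1 (x + (N:ℝ) • k) *
          ENNReal.ofReal |u (x + (i:ℝ) • k) - u (x + ((i:ℝ)+1) • k)|) := by
    intro x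
    rw [← lintegral_add_left_eq_self (fun y => B.indicator 1 x * (B.indicator 1 y *
        ENNReal.ofReal |u (x + ((i:ℝ)/(N:ℝ)) • (y - x)) -
          u (x + (((i:ℝ)+1)/(N:ℝ)) • (y - x))|)) x]
    simp only [add_sub_cancel_left]
    rw [lint_scale _ (hmF x) hNpos]
    congr 1
    refine lintegral_congr fun k => ?_
    rw [harg, harg]
  have hswapm : Measurable (Function.uncurry (fun x k : EE n =>
      B.indicator 1 x * (B.indicator 1 (x + (N:ℝ) • k) *
        ENNReal.ofReal |u (x + (i:ℝ) • k) - u (x + ((i:ℝ)+1) • k)|))) := by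
    refine Measurable.mul ?_ (Measurable.mul ?_ ?_)
    · exact (measurable_one.indicator hBm).comp measurable_fst
    · exact (measurable_one.indicator hBm).comp
        (measurable_fst.add (measurable_snd.const_smul (N:ℝ)))
    · exact ENNReal.measurable_ofReal.comp
        (((hu.comp (measurable_fst.add (measurable_snd.const_smul (i:ℝ)))).sub
          (hu.comp (measurable_fst.add (measurable_snd.const_smul ((i:ℝ)+1))))).abs)
  have e4 : ∫⁻ x, ∫⁻ k, B.indicator 1 x * (B.indicator 1 (x + (N:ℝ) • k) *
        ENNReal.ofReal |u (x + (i:ℝ) • k) - u (x + ((i:ℝ)+1) • k)|) =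
      ∫⁻ k, ∫⁻ x, B.indicator 1 x * (B.indicator 1 (x + (N:ℝ) • k) *
        ENNReal.ofReal |u (x + (i:ℝ) • k) - u (x + ((i:ℝ)+1) • k)|) :=
    lintegral_lintegral_swap hswapm.aemeasurable
  have e5 : ∀ k : EE n, ∫⁻ x, B.indicator 1 x * (B.indicator 1 (x + (N:ℝ) • k) *
        ENNReal.ofReal |u (x + (i:ℝ) • k) - u (x + ((i:ℝ)+1) • k)|) =
      ∫⁻ z, B.indicator 1 (z - (i:ℝ) • k) * (B.indicator 1 (z + ((N:ℝ) - (i:ℝ)) • k) *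
        ENNReal.ofReal |u z - u (z + k)|) := by
    intro k
    rw [← lintegral_add_left_eq_self (fun x => B.indicator 1 x *
        (B.indicator 1 (x + (N:ℝ) • k) *
          ENNReal.ofReal |u (x + (i:ℝ) • k) - u (x + ((i:ℝ)+1) • k)|)) (-((i:ℝ) • k))]
    refine lintegral_congr fun z => ?_
    have id0 : -((i:ℝ) • k) + z = z - (i:ℝ) • k := neg_add_eq_sub _ _
    have id1 : z - (i:ℝ) • k + (N:ℝ) • k = z + ((N:ℝ) - (i:ℝ)) • k := by module
    have id2 : z - (i:ℝ) • k + (i:ℝ) • k = z := by module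
    have id3 : z - (i:ℝ) • k + ((i:ℝ)+1) • k = z + k := by module
    simp only [id0, id1, id2, id3]
  calc ∫⁻ x in B, ∫⁻ y in B,
        ENNReal.ofReal |u (x + ((i:ℝ)/(N:ℝ)) • (y - x)) -
          u (x + (((i:ℝ)+1)/(N:ℝ)) • (y - x))|
      = ∫⁻ x, ∫⁻ y, B.indicator 1 x * (B.indicator 1 y *
          ENNReal.ofReal |u (x + ((i:ℝ)/(N:ℝ)) • (y - x)) -
            u (x + (((i:ℝ)+1)/(N:ℝ)) • (y - x))|) := e1
    _ = ENNReal.ofReal ((N:ℝ) ^ n) * ∫⁻ x, ∫⁻ k, B.indicator 1 x *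
          (B.indicator 1 (x + (N:ℝ) • k) *
            ENNReal.ofReal |u (x + (i:ℝ) • k) - u (x + ((i:ℝ)+1) • k)|) := by
        rw [lintegral_congr e2, lintegral_const_mul' _ _ ENNReal.ofReal_ne_top]
    _ = ENNReal.ofReal ((N:ℝ) ^ n) * ∫⁻ k, ∫⁻ z,
          B.indicator 1 (z - (i:ℝ) • k) * (B.indicator 1 (z + ((N:ℝ) - (i:ℝ)) • k) *
            ENNReal.ofReal |u z - u (z + k)|) := by
        rw [e4, lintegral_congr e5]
    _ ≤ ENNReal.ofReal ((N:ℝ) ^ n) * Gint n u R (2 * R / N) := by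
        refine mul_le_mul_right ?_ _
        refine lintegral_mono fun k => lintegral_mono fun z => ?_
        exact ind_bound hN hi k z _

lemma meas_indd {α : Type*} [MeasurableSpace α] {r : ℝ} {f g : α → EE n}
    (hf : Measurable f) (hg : Measurable g) :
    Measurable (fun w => (ball (f w) r).indicator (1 : EE n → ℝ≥0∞) (g w)) := by
  have he : (fun w => (ball (f w) r).indicator (1 : EE n → ℝ≥0∞) (g w)) =
      fun w => if dist (g w) (f w) < r then (1:ℝ≥0∞) else 0 := by
    funext w; by_cases h : g w ∈ ball (f w) r
    · rw [Set.indicator_of_mem h]; rw [mem_ball] at h; simp [h]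
    · rw [Set.indicator_of_notMem h]; rw [mem_ball] at h; simp [h]
  rw [he]
  exact Measurable.ite ((hg.dist hf) measurableSet_Iio) measurable_const measurable_const

lemma ind_ball_symm (a b : EE n) (r : ℝ) :
    (ball a r).indicator (1 : EE n → ℝ≥0∞) b = (ball b r).indicator 1 a := by
  by_cases h : b ∈ ball a r
  · rw [Set.indicator_of_mem h, Set.indicator_of_mem (by rwa [mem_ball_comm] at h)]
    rfl
  · rw [Set.indicator_of_notMem h, Set.indicator_of_notMem (by rwa [mem_ball_comm] at h)]

lemma lint_ind_three {s t v : Set (EE n)} (hs : MeasurableSet s) (ht : MeasurableSet t)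
    (hv : MeasurableSet v) (c : ℝ≥0∞) :
    ∫⁻ z, s.indicator 1 z * (t.indicator 1 z * (v.indicator 1 z * c)) =
      volume (s ∩ t ∩ v) * c := by
  have he : (fun z => s.indicator (1 : EE n → ℝ≥0∞) z * (t.indicator 1 z *
      (v.indicator 1 z * c))) = (s ∩ t ∩ v).indicator (fun _ => c) := by
    funext z
    by_cases h1 : z ∈ s <;> by_cases h2 : z ∈ t <;> by_cases h3 : z ∈ v <;>
      simp [Set.indicator_apply, h1, h2, h3]
  rw [he, lintegral_indicator ((hs.inter ht).inter hv), setLIntegral_const, mul_comm]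

lemma chain_pointwise {u : EE n → ℝ} {N : ℕ} (hN : 0 < N) (x y : EE n) :
    ENNReal.ofReal |u x - u y| ≤
      ∑ i ∈ Finset.range N, ENNReal.ofReal |u (x + ((i:ℝ)/(N:ℝ)) • (y - x)) -
        u (x + (((i:ℝ)+1)/(N:ℝ)) • (y - x))| := by
  have hNpos : (0:ℝ) < N := by exact_mod_cast hN
  set g : ℕ → ℝ := fun j => u (x + ((j:ℝ)/(N:ℝ)) • (y - x)) with hg
  have h0 : g 0 = u x := by simp [hg]
  have hNv : g N = u y := by
    rw [hg]; simp only [div_self hNpos.ne', one_smul]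
    congr 1; abel
  have htel : u x - u y = ∑ i ∈ Finset.range N, (g i - g (i+1)) := by
    rw [Finset.sum_range_sub' g N, h0, hNv]
  calc ENNReal.ofReal |u x - u y|
      = ENNReal.ofReal |∑ i ∈ Finset.range N, (g i - g (i+1))| := by rw [htel]
    _ ≤ ENNReal.ofReal (∑ i ∈ Finset.range N, |g i - g (i+1)|) :=
        ENNReal.ofReal_le_ofReal (Finset.abs_sum_le_sum_abs _ _)
    _ = ∑ i ∈ Finset.range N, ENNReal.ofReal |g i - g (i+1)| :=
        ENNReal.ofReal_sum_of_nonneg (fun i _ => abs_nonneg _)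
    _ = ∑ i ∈ Finset.range N, ENNReal.ofReal |u (x + ((i:ℝ)/(N:ℝ)) • (y - x)) -
          u (x + (((i:ℝ)+1)/(N:ℝ)) • (y - x))| := by
        refine Finset.sum_congr rfl fun i _ => ?_
        rw [hg]; push_cast; ring_nf

lemma meas_aux {u : EE n → ℝ} (hu : Measurable u) (a b : ℝ) :
    Measurable (fun w : EE n × EE n => ENNReal.ofReal |u (w.1 + a • (w.2 - w.1)) -
      u (w.1 + b • (w.2 - w.1))|) :=
  ENNReal.measurable_ofReal.comp
    (((hu.comp (measurable_fst.add ((measurable_snd.sub measurable_fst).const_smul a))).sub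
      (hu.comp (measurable_fst.add ((measurable_snd.sub measurable_fst).const_smul b)))).abs)

lemma chainSum {u : EE n → ℝ} (hu : Measurable u) {R : ℝ} {N : ℕ} (hN : 0 < N) :
    ∫⁻ x in ball (0:EE n) R, ∫⁻ y in ball (0:EE n) R, ENNReal.ofReal |u x - u y| ≤
      (N : ℝ≥0∞) * (ENNReal.ofReal ((N:ℝ) ^ n) * Gint n u R (2 * R / N)) := by
  have step1 : ∫⁻ x in ball (0:EE n) R, ∫⁻ y in ball (0:EE n) R,
      ENNReal.ofReal |u x - u y| ≤
      ∑ i ∈ Finset.range N, ∫⁻ x in ball (0:EE n) R, ∫⁻ y in ball (0:EE n) R,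
        ENNReal.ofReal |u (x + ((i:ℝ)/(N:ℝ)) • (y - x)) -
          u (x + (((i:ℝ)+1)/(N:ℝ)) • (y - x))| := by
    have hle : ∫⁻ x in ball (0:EE n) R, ∫⁻ y in ball (0:EE n) R,
        ENNReal.ofReal |u x - u y| ≤
        ∫⁻ x in ball (0:EE n) R, ∫⁻ y in ball (0:EE n) R,
          ∑ i ∈ Finset.range N, ENNReal.ofReal |u (x + ((i:ℝ)/(N:ℝ)) • (y - x)) -
            u (x + (((i:ℝ)+1)/(N:ℝ)) • (y - x))| :=
      lintegral_mono fun x => lintegral_mono fun y => chain_pointwise hN x y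
    refine le_trans hle (le_of_eq ?_)
    rw [← lintegral_finset_sum]
    · refine lintegral_congr fun x => ?_
      rw [← lintegral_finset_sum]
      intro i _
      exact ((meas_aux hu ((i:ℝ)/(N:ℝ)) (((i:ℝ)+1)/(N:ℝ))).comp
        (measurable_const.prodMk measurable_id)).comp measurable_id
    · intro i _
      exact (meas_aux hu ((i:ℝ)/(N:ℝ)) (((i:ℝ)+1)/(N:ℝ))).lintegral_prod_right'
  refine le_trans step1 ?_
  calc ∑ i ∈ Finset.range N, ∫⁻ x in ball (0:EE n) R, ∫⁻ y in ball (0:EE n) R,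
        ENNReal.ofReal |u (x + ((i:ℝ)/(N:ℝ)) • (y - x)) -
          u (x + (((i:ℝ)+1)/(N:ℝ)) • (y - x))|
      ≤ ∑ _i ∈ Finset.range N, ENNReal.ofReal ((N:ℝ) ^ n) * Gint n u R (2 * R / N) :=
        Finset.sum_le_sum fun i hi => chainStep hu hN (Finset.mem_range.mp hi)
    _ = (N : ℝ≥0∞) * (ENNReal.ofReal ((N:ℝ) ^ n) * Gint n u R (2 * R / N)) := by
        rw [Finset.sum_const, Finset.card_range, nsmul_eq_mul]

lemma lowerJ {u : EE n → ℝ} (hu : Measurable u) {R r κ : ℝ} (hR : 0 < R) (hr : 0 < r)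
    (hκr : κ ≤ r/2) (hr4 : r ≤ 4*R) :
    volume (ball (0:EE n) (r/4)) * Gint n u R κ ≤
      ∫⁻ z' in ball (0:EE n) R, ∫⁻ p in ball z' r, ∫⁻ q in ball z' r,
        ENNReal.ofReal |u p - u q| := by
  set B := ball (0:EE n) R with hBdef
  have hBm : MeasurableSet B := measurableSet_ball
  have hv4 : volume (ball (0:EE n) (r/4)) ≠ ⊤ := measure_ball_lt_top.ne
  -- e1 : RHS in global triple-indicator form
  have e1 : ∫⁻ z' in B, ∫⁻ p in ball z' r, ∫⁻ q in ball z' r, ENNReal.ofReal |u p - u q| =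
      ∫⁻ z', ∫⁻ p, ∫⁻ k, B.indicator 1 z' * ((ball p r).indicator 1 z' *
        ((ball (p + k) r).indicator 1 z' * ENNReal.ofReal |u p - u (p + k)|)) := by
    rw [ind_one_mul hBm]
    refine lintegral_congr fun z' => ?_
    rw [ind_one_mul measurableSet_ball, ← lintegral_const_mul' _ _ (ind_ne_top z')]
    refine lintegral_congr fun p => ?_
    rw [ind_one_mul measurableSet_ball,
      ← lintegral_add_left_eq_self (fun q => (ball z' r).indicator 1 q *
        ENNReal.ofReal |u p - u q|) p,
      ← lintegral_const_mul' _ _ (ind_ne_top p), ← lintegral_const_mul' _ _ (ind_ne_top z')]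
    refine lintegral_congr fun k => ?_
    rw [ind_ball_symm z' p, ind_ball_symm z' (p + k)]
  -- measurability of the triple integrand, shape ((z',p),k)
  have mA : Measurable (fun w : (EE n × EE n) × EE n => B.indicator 1 w.1.1 *
      ((ball w.1.2 r).indicator 1 w.1.1 * ((ball (w.1.2 + w.2) r).indicator 1 w.1.1 *
        ENNReal.ofReal |u w.1.2 - u (w.1.2 + w.2)|))) := by
    refine Measurable.mul ?_ (Measurable.mul ?_ (Measurable.mul ?_ ?_))
    · exact (measurable_one.indicator hBm).comp measurable_fst.fst
    · exact meas_indd measurable_fst.snd measurable_fst.fst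
    · exact meas_indd (measurable_fst.snd.add measurable_snd) measurable_fst.fst
    · exact (meas_phi hu).comp
        (measurable_fst.snd.prodMk (measurable_fst.snd.add measurable_snd))
  -- e2 : swap z' and p
  have e2 : ∫⁻ z', ∫⁻ p, ∫⁻ k, B.indicator 1 z' * ((ball p r).indicator 1 z' *
        ((ball (p + k) r).indicator 1 z' * ENNReal.ofReal |u p - u (p + k)|)) =
      ∫⁻ p, ∫⁻ z', ∫⁻ k, B.indicator 1 z' * ((ball p r).indicator 1 z' *
        ((ball (p + k) r).indicator 1 z' * ENNReal.ofReal |u p - u (p + k)|)) :=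
    lintegral_lintegral_swap (Measurable.lintegral_prod_right' mA).aemeasurable
  -- e3 : for fixed p, swap z' and k
  have e3 : ∀ p : EE n, ∫⁻ z', ∫⁻ k, B.indicator 1 z' * ((ball p r).indicator 1 z' *
        ((ball (p + k) r).indicator 1 z' * ENNReal.ofReal |u p - u (p + k)|)) =
      ∫⁻ k, ∫⁻ z', B.indicator 1 z' * ((ball p r).indicator 1 z' *
        ((ball (p + k) r).indicator 1 z' * ENNReal.ofReal |u p - u (p + k)|)) := by
    intro p
    refine lintegral_lintegral_swap (Measurable.aemeasurable ?_)
    refine Measurable.mul ?_ (Measurable.mul ?_ (Measurable.mul ?_ ?_))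
    · exact (measurable_one.indicator hBm).comp measurable_fst
    · exact meas_indd measurable_const measurable_fst
    · exact meas_indd (measurable_const.add measurable_snd) measurable_fst
    · exact ENNReal.measurable_ofReal.comp
        ((measurable_const.sub (hu.comp (measurable_const.add measurable_snd))).abs)
  -- e4 : innermost integral is a measure
  have e4 : ∀ p k : EE n, ∫⁻ z', B.indicator 1 z' * ((ball p r).indicator 1 z' *
        ((ball (p + k) r).indicator 1 z' * ENNReal.ofReal |u p - u (p + k)|)) =
      volume (B ∩ ball p r ∩ ball (p + k) r) * ENNReal.ofReal |u p - u (p + k)| :=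
    fun p k => lint_ind_three hBm measurableSet_ball measurableSet_ball _
  -- pointwise lower bound
  have hbound : ∀ p k : EE n, volume (ball (0:EE n) (r/4)) *
      ((ball (0:EE n) κ).indicator 1 k * B.indicator 1 p * B.indicator 1 (p + k) *
        ENNReal.ofReal |u p - u (p + k)|) ≤
      volume (B ∩ ball p r ∩ ball (p + k) r) * ENNReal.ofReal |u p - u (p + k)| := by
    intro p k
    by_cases h1 : k ∈ ball (0:EE n) κ
    case neg => simp [Set.indicator_of_notMem h1]
    by_cases h2 : p ∈ B
    case neg => simp [Set.indicator_of_notMem h2]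
    by_cases h3 : p + k ∈ B
    case neg => simp [Set.indicator_of_notMem h3]
    rw [Set.indicator_of_mem h1, Set.indicator_of_mem h2, Set.indicator_of_mem h3]
    simp only [Pi.one_apply, one_mul, mul_one]
    exact mul_le_mul' (geom hR hr hκr hr4 h2 h1) le_rfl
  -- Gint in p-outer form with constant inside
  have mX : Measurable (fun w : EE n × EE n => (ball (0:EE n) κ).indicator 1 w.1 *
      B.indicator 1 w.2 * B.indicator 1 (w.2 + w.1) *
        ENNReal.ofReal |u w.2 - u (w.2 + w.1)|) := by
    refine Measurable.mul (Measurable.mul (Measurable.mul ?_ ?_) ?_) ?_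
    · exact (measurable_one.indicator measurableSet_ball).comp measurable_fst
    · exact (measurable_one.indicator hBm).comp measurable_snd
    · exact (measurable_one.indicator hBm).comp (measurable_snd.add measurable_fst)
    · exact (meas_phi hu).comp (measurable_snd.prodMk (measurable_snd.add measurable_fst))
  have eG : volume (ball (0:EE n) (r/4)) * Gint n u R κ =
      ∫⁻ p, ∫⁻ k, volume (ball (0:EE n) (r/4)) *
        ((ball (0:EE n) κ).indicator 1 k * B.indicator 1 p * B.indicator 1 (p + k) *
          ENNReal.ofReal |u p - u (p + k)|) := by
    have hsw : Gint n u R κ = ∫⁻ p, ∫⁻ k, (ball (0:EE n) κ).indicator 1 k *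
        B.indicator 1 p * B.indicator 1 (p + k) *
          ENNReal.ofReal |u p - u (p + k)| := lintegral_lintegral_swap mX.aemeasurable
    rw [hsw, ← lintegral_const_mul' _ _ hv4]
    refine lintegral_congr fun p => ?_
    rw [← lintegral_const_mul' _ _ hv4]
  calc volume (ball (0:EE n) (r/4)) * Gint n u R κ
      = ∫⁻ p, ∫⁻ k, volume (ball (0:EE n) (r/4)) *
          ((ball (0:EE n) κ).indicator 1 k * B.indicator 1 p * B.indicator 1 (p + k) *
            ENNReal.ofReal |u p - u (p + k)|) := eG
    _ ≤ ∫⁻ p, ∫⁻ k, volume (B ∩ ball p r ∩ ball (p + k) r) *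
          ENNReal.ofReal |u p - u (p + k)| :=
        lintegral_mono fun p => lintegral_mono fun k => hbound p k
    _ = ∫⁻ z' in B, ∫⁻ p in ball z' r, ∫⁻ q in ball z' r, ENNReal.ofReal |u p - u q| := by
        rw [e1, e2]
        refine (lintegral_congr fun p => ?_).symm
        rw [e3 p]
        exact lintegral_congr fun k => e4 p k

lemma upperJ {u : EE n → ℝ} (hu : Measurable u) {R r : ℝ} :
    ∫⁻ z' in ball (0:EE n) R, ∫⁻ p in ball z' r, ∫⁻ q in ball z' r,
        ENNReal.ofReal |u p - u q| ≤
      2 * volume (ball (0:EE n) r) ^ 2 * ∫⁻ x in ball (0:EE n) R, oscBall n r u x := by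
  calc ∫⁻ z' in ball (0:EE n) R, ∫⁻ p in ball z' r, ∫⁻ q in ball z' r,
        ENNReal.ofReal |u p - u q|
      ≤ ∫⁻ z' in ball (0:EE n) R, 2 * volume (ball (0:EE n) r) ^ 2 * oscBall n r u z' :=
        lintegral_mono fun z' => upper hu z'
    _ = 2 * volume (ball (0:EE n) r) ^ 2 * ∫⁻ x in ball (0:EE n) R, oscBall n r u x :=
        lintegral_const_mul' _ _
          (ENNReal.mul_ne_top (by simp) (ENNReal.pow_ne_top measure_ball_lt_top.ne))

lemma stepA {u : EE n → ℝ} (hu : Measurable u) {R : ℝ} (hR : 0 < R)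
    (hint : IntegrableOn u (ball (0:EE n) R) volume) :
    ∫⁻ x in ball (0:EE n) R, ENNReal.ofReal |u x - ⨍ y in ball (0:EE n) R, u y| ≤
      (volume (ball (0:EE n) R))⁻¹ *
        ∫⁻ x in ball (0:EE n) R, ∫⁻ y in ball (0:EE n) R, ENNReal.ofReal |u x - u y| := by
  set B := ball (0:EE n) R with hBdef
  have hBmlt : volume B < ⊤ := measure_ball_lt_top
  have hB0 : volume B ≠ 0 := (measure_ball_pos volume 0 hR).ne'
  have hBt : volume B ≠ ⊤ := hBmlt.ne
  set V : ℝ := (volume B).toReal with hV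
  have hVpos : 0 < V := ENNReal.toReal_pos hB0 hBt
  have hpt : ∀ x : EE n, ENNReal.ofReal |u x - ⨍ y in B, u y| ≤
      (volume B)⁻¹ * ∫⁻ y in B, ENNReal.ofReal |u x - u y| := by
    intro x
    have hconst : IntegrableOn (fun _ : EE n => u x) B volume :=
      integrableOn_const hBmlt.ne
    have hint2 : Integrable (fun y => u x - u y) (volume.restrict B) := hconst.sub hint
    have havg : u x - ⨍ y in B, u y = V⁻¹ * ∫ y in B, (u x - u y) := by
      rw [setAverage_eq, integral_sub hconst hint, integral_const,
        measureReal_restrict_apply_univ, show volume.real B = V from rfl]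
      simp only [smul_eq_mul]
      field_simp
    have habs : |u x - ⨍ y in B, u y| ≤ V⁻¹ * ∫ y in B, |u x - u y| := by
      rw [havg, abs_mul, abs_of_nonneg (inv_nonneg.mpr hVpos.le)]
      refine mul_le_mul_of_nonneg_left ?_ (inv_nonneg.mpr hVpos.le)
      have h := norm_integral_le_integral_norm (μ := volume.restrict B)
        (fun y => u x - u y)
      simpa [Real.norm_eq_abs] using h
    calc ENNReal.ofReal |u x - ⨍ y in B, u y|
        ≤ ENNReal.ofReal (V⁻¹ * ∫ y in B, |u x - u y|) := ENNReal.ofReal_le_ofReal habs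
      _ = ENNReal.ofReal V⁻¹ * ENNReal.ofReal (∫ y in B, |u x - u y|) :=
          ENNReal.ofReal_mul (inv_nonneg.mpr hVpos.le)
      _ = (volume B)⁻¹ * ∫⁻ y in B, ENNReal.ofReal |u x - u y| := by
          congr 1
          · rw [ENNReal.ofReal_inv_of_pos hVpos, hV, ENNReal.ofReal_toReal hBt]
          · exact ofReal_integral_eq_lintegral_ofReal hint2.abs
              (Filter.Eventually.of_forall fun y => abs_nonneg _)
  calc ∫⁻ x in B, ENNReal.ofReal |u x - ⨍ y in B, u y|
      ≤ ∫⁻ x in B, (volume B)⁻¹ * ∫⁻ y in B, ENNReal.ofReal |u x - u y| :=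
        lintegral_mono fun x => hpt x
    _ = (volume B)⁻¹ * ∫⁻ x in B, ∫⁻ y in B, ENNReal.ofReal |u x - u y| :=
        lintegral_const_mul' _ _ (ENNReal.inv_ne_top.mpr hB0)

lemma vol_ball_eq (hn : 1 ≤ n) {s : ℝ} (hs : 0 ≤ s) :
    volume (ball (0:EE n) s) = ENNReal.ofReal (s ^ n) * volume (ball (0:EE n) 1) := by
  haveI : Nontrivial (EE n) := by
    refine ⟨EuclideanSpace.single ⟨0, hn⟩ 1, 0, fun h => ?_⟩
    have h2 : (EuclideanSpace.single ⟨0, hn⟩ (1:ℝ) : EE n) ⟨0, hn⟩ = (0 : EE n) ⟨0, hn⟩ := by rw [h]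
    rw [EuclideanSpace.single_apply] at h2
    simp at h2
  rw [Measure.addHaar_ball volume 0 hs, finrank_euclideanSpace_fin]

lemma oscBall_mono {u : EE n → ℝ} {r' r : ℝ} (h : r' ≤ r) (x : EE n) :
    oscBall n r' u x ≤ oscBall n r u x := by
  refine essSup_mono_measure ?_
  exact Measure.AbsolutelyContinuous.prod
    (Measure.absolutelyContinuous_of_le (Measure.restrict_mono (ball_subset_ball h) le_rfl))
    (Measure.absolutelyContinuous_of_le (Measure.restrict_mono (ball_subset_ball h) le_rfl))

lemma scalar (hn : 1 ≤ n) {R r : ℝ} (hR : 0 < R) (hr : 0 < r) {N : ℕ} (hN : 0 < N)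
    (hNle : (N:ℝ) ≤ 6 * R / r) :
    (volume (ball (0:EE n) R))⁻¹ * ((N:ℝ≥0∞) * (ENNReal.ofReal ((N:ℝ)^n) *
      ((volume (ball (0:EE n) (r/4)))⁻¹ * (2 * volume (ball (0:EE n) r)^2)))) ≤
      ENNReal.ofReal (12 * 24^n * R / r) := by
  have hNp : (0:ℝ) < N := by exact_mod_cast hN
  set v1 := volume (ball (0:EE n) 1) with hv1
  have hv10 : v1 ≠ 0 := (measure_ball_pos volume 0 one_pos).ne'
  have hv1t : v1 ≠ ⊤ := measure_ball_lt_top.ne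
  set W : ℝ := v1.toReal with hW
  have hWpos : 0 < W := ENNReal.toReal_pos hv10 hv1t
  set A : ℝ≥0∞ := (volume (ball (0:EE n) R))⁻¹ * ((N:ℝ≥0∞) * (ENNReal.ofReal ((N:ℝ)^n) *
      ((volume (ball (0:EE n) (r/4)))⁻¹ * (2 * volume (ball (0:EE n) r)^2)))) with hA
  have hAt : A ≠ ⊤ := by
    rw [hA]
    have h1 : (volume (ball (0:EE n) R))⁻¹ ≠ ⊤ :=
      ENNReal.inv_ne_top.mpr (measure_ball_pos volume 0 hR).ne'
    have h2 : (volume (ball (0:EE n) (r/4)))⁻¹ ≠ ⊤ :=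
      ENNReal.inv_ne_top.mpr (measure_ball_pos volume 0 (by positivity)).ne'
    exact ENNReal.mul_ne_top h1 (ENNReal.mul_ne_top (by simp)
      (ENNReal.mul_ne_top ENNReal.ofReal_ne_top (ENNReal.mul_ne_top h2
        (ENNReal.mul_ne_top (by simp) (ENNReal.pow_ne_top measure_ball_lt_top.ne)))))
  rw [← ENNReal.ofReal_toReal hAt]
  apply ENNReal.ofReal_le_ofReal
  have hAval : A.toReal = (R^n * W)⁻¹ * ((N:ℝ) * ((N:ℝ)^n *
      (((r/4)^n * W)⁻¹ * (2 * (r^n * W)^2)))) := by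
    rw [hA, vol_ball_eq hn hR.le, vol_ball_eq hn (by positivity : (0:ℝ) ≤ r/4),
      vol_ball_eq hn hr.le]
    simp only [ENNReal.toReal_mul, ENNReal.toReal_inv, ENNReal.toReal_pow,
      ENNReal.toReal_natCast, ENNReal.toReal_ofNat,
      ENNReal.toReal_ofReal (pow_nonneg hR.le n),
      ENNReal.toReal_ofReal (pow_nonneg (by positivity : (0:ℝ) ≤ r/4) n),
      ENNReal.toReal_ofReal (pow_nonneg hr.le n),
      ENNReal.toReal_ofReal (pow_nonneg (by positivity : (0:ℝ) ≤ (N:ℝ)) n), ← hW]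
    rfl
  rw [hAval]
  have heq : (R^n * W)⁻¹ * ((N:ℝ) * ((N:ℝ)^n * (((r/4)^n * W)⁻¹ * (2 * (r^n * W)^2)))) =
      2 * (N:ℝ)^(n+1) * 4^n * r^n / R^n := by
    have h4 : ((r:ℝ)/4)^n = r^n / 4^n := div_pow r 4 n
    rw [h4]
    field_simp
    ring
  rw [heq]
  have hkey : (N:ℝ)^(n+1) ≤ (6*R/r)^(n+1) := pow_le_pow_left₀ hNp.le hNle (n+1)
  calc 2 * (N:ℝ)^(n+1) * 4^n * r^n / R^n ≤ 2 * (6*R/r)^(n+1) * 4^n * r^n / R^n := by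
        gcongr
    _ = 12 * 24^n * R / r := by
        rw [div_pow, mul_pow, show (24:ℝ) = 4 * 6 by norm_num, mul_pow]
        field_simp
        ring

lemma core (hn : 1 ≤ n) {R r : ℝ} (hR : 0 < R) (hr : 0 < r) (hr2 : r ≤ 2 * R)
    {u : EE n → ℝ} (hu : Measurable u)
    (hint : IntegrableOn u (ball (0:EE n) R) volume) :
    ∫⁻ x in ball (0:EE n) R, ENNReal.ofReal |u x - ⨍ y in ball (0:EE n) R, u y| ≤
      ENNReal.ofReal (12 * 24 ^ n * R / r) *
        ∫⁻ x in ball (0:EE n) R, oscBall n r u x := by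
  set N : ℕ := ⌈4 * R / r⌉₊ with hNdef
  have h4Rr : 0 < 4 * R / r := by positivity
  have hN : 0 < N := Nat.ceil_pos.mpr h4Rr
  have hNpos : (0:ℝ) < N := by exact_mod_cast hN
  have hNge : 4 * R / r ≤ (N:ℝ) := Nat.le_ceil _
  have hNle : (N:ℝ) ≤ 6 * R / r := by
    have h1 : (N:ℝ) < 4 * R / r + 1 := Nat.ceil_lt_add_one h4Rr.le
    have h2 : (1:ℝ) ≤ 2 * R / r := by rw [le_div_iff₀ hr]; linarith
    have h3 : 4 * R / r + 2 * R / r = 6 * R / r := by ring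
    linarith
  have hκr : 2 * R / (N:ℝ) ≤ r / 2 := by
    rw [div_le_iff₀ hNpos]
    have h := mul_le_mul_of_nonneg_left hNge (by positivity : (0:ℝ) ≤ r / 2)
    calc 2 * R = r / 2 * (4 * R / r) := by field_simp; ring
      _ ≤ r / 2 * N := h
      _ = r / 2 * N := rfl
  have hv40 : volume (ball (0:EE n) (r/4)) ≠ 0 :=
    (measure_ball_pos volume 0 (by positivity)).ne'
  have hv4t : volume (ball (0:EE n) (r/4)) ≠ ⊤ := measure_ball_lt_top.ne
  have hOSC : Gint n u R (2 * R / N) ≤ (volume (ball (0:EE n) (r/4)))⁻¹ *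
      (2 * volume (ball (0:EE n) r) ^ 2 * ∫⁻ x in ball (0:EE n) R, oscBall n r u x) := by
    have h := le_trans (lowerJ hu hR hr hκr (by linarith) (κ := 2 * R / N)) (upperJ hu)
    calc Gint n u R (2 * R / N)
        = (volume (ball (0:EE n) (r/4)))⁻¹ *
            (volume (ball (0:EE n) (r/4)) * Gint n u R (2 * R / N)) := by
          rw [← mul_assoc, ENNReal.inv_mul_cancel hv40 hv4t, one_mul]
      _ ≤ _ := mul_le_mul_right h _
  calc ∫⁻ x in ball (0:EE n) R, ENNReal.ofReal |u x - ⨍ y in ball (0:EE n) R, u y|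
      ≤ (volume (ball (0:EE n) R))⁻¹ *
          ∫⁻ x in ball (0:EE n) R, ∫⁻ y in ball (0:EE n) R, ENNReal.ofReal |u x - u y| :=
        stepA hu hR hint
    _ ≤ (volume (ball (0:EE n) R))⁻¹ *
          ((N : ℝ≥0∞) * (ENNReal.ofReal ((N:ℝ) ^ n) * Gint n u R (2 * R / N))) :=
        mul_le_mul_right (chainSum hu hN) _
    _ ≤ (volume (ball (0:EE n) R))⁻¹ * ((N : ℝ≥0∞) * (ENNReal.ofReal ((N:ℝ) ^ n) *
          ((volume (ball (0:EE n) (r/4)))⁻¹ *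
            (2 * volume (ball (0:EE n) r) ^ 2 * ∫⁻ x in ball (0:EE n) R, oscBall n r u x)))) := by
        exact mul_le_mul_right (mul_le_mul_right (mul_le_mul_right hOSC _) _) _
    _ = ((volume (ball (0:EE n) R))⁻¹ * ((N : ℝ≥0∞) * (ENNReal.ofReal ((N:ℝ) ^ n) *
          ((volume (ball (0:EE n) (r/4)))⁻¹ * (2 * volume (ball (0:EE n) r) ^ 2))))) *
          ∫⁻ x in ball (0:EE n) R, oscBall n r u x := by ring
    _ ≤ ENNReal.ofReal (12 * 24 ^ n * R / r) *
          ∫⁻ x in ball (0:EE n) R, oscBall n r u x :=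
        mul_le_mul_left (scalar hn hR hr hN hNle) _

end PW

/-- Nonlocal Poincaré–Wirtinger inequality: there is `C = C(n) > 0` such that for
`λ ≥ 1`, `0 < r ≤ λ R`, and `u` measurable on `B_{R+r}` and integrable on `B_R`, with
`⟨u⟩_R` the average of `u` on `B_R`,
`∫_{B_R} |u - ⟨u⟩_R| ≤ (C R λ / r) ∫_{B_R} osc_{B_r(x)} u dx` in `[0, ∞]`. -/
theorem poincare_wirtinger (n : ℕ) (hn : 1 ≤ n) :
    ∃ C : ℝ, 0 < C ∧
      ∀ lam : ℝ, 1 ≤ lam → ∀ R : ℝ, 0 < R → ∀ r : ℝ, 0 < r → r ≤ lam * R →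
        ∀ u : EuclideanSpace ℝ (Fin n) → ℝ, Measurable u →
          IntegrableOn u (ball (0 : EuclideanSpace ℝ (Fin n)) R) volume →
          ∫⁻ x in ball (0 : EuclideanSpace ℝ (Fin n)) R,
              ENNReal.ofReal |u x - ⨍ y in ball (0 : EuclideanSpace ℝ (Fin n)) R, u y| ≤
            ENNReal.ofReal (C * R * lam / r) *
              ∫⁻ x in ball (0 : EuclideanSpace ℝ (Fin n)) R, oscBall n r u x := by
  refine ⟨12 * 24 ^ n, by positivity, ?_⟩
  intro lam hlam R hR r hr hrlam u hu hint
  have hr'0 : 0 < min r (2 * R) := lt_min hr (by positivity)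
  have hr'2 : min r (2 * R) ≤ 2 * R := min_le_right _ _
  have hcore := PW.core hn hR hr'0 hr'2 hu hint
  have hcoef : ENNReal.ofReal (12 * 24 ^ n * R / min r (2 * R)) ≤
      ENNReal.ofReal (12 * 24 ^ n * R * lam / r) := by
    apply ENNReal.ofReal_le_ofReal
    have hC : (0:ℝ) < 12 * 24 ^ n := by positivity
    rcases le_total r (2 * R) with h | h
    · rw [min_eq_left h, div_le_div_iff₀ hr hr]
      nlinarith [mul_nonneg (mul_nonneg (mul_nonneg hC.le hR.le) hr.le)
        (sub_nonneg.mpr hlam)]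
    · rw [min_eq_right h]
      have h2 : (12 * 24 ^ n : ℝ) ≤ 12 * 24 ^ n * R * lam / r := by
        rw [le_div_iff₀ hr]
        nlinarith
      have h3 : 12 * 24 ^ n * R / (2 * R) = 12 * 24 ^ n / 2 := by
        field_simp
      rw [h3]
      linarith
  calc ∫⁻ x in ball (0 : EuclideanSpace ℝ (Fin n)) R,
        ENNReal.ofReal |u x - ⨍ y in ball (0 : EuclideanSpace ℝ (Fin n)) R, u y|
      ≤ ENNReal.ofReal (12 * 24 ^ n * R / min r (2 * R)) *
          ∫⁻ x in ball (0 : EuclideanSpace ℝ (Fin n)) R, oscBall n (min r (2 * R)) u x :=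
        hcore
    _ ≤ ENNReal.ofReal (12 * 24 ^ n * R * lam / r) *
          ∫⁻ x in ball (0 : EuclideanSpace ℝ (Fin n)) R, oscBall n r u x :=
        mul_le_mul' hcoef
          (lintegral_mono fun x => PW.oscBall_mono (min_le_left _ _) x)
end
end
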